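/- Let q(x,y,z) = x² + y² + z² + xy + xz + yz ∈ ℂ[x,y,z] and let D(u,v) = a₁b₁a₂² + a₁²a₂b₂ + c₁²a₂c₂ + b₁c₁b₂² + b₁²b₂c₂ + a₁c₁c₂² for u = (a₁,b₁,c₁), v = (a₂,b₂,c₂). For all nonzero vectors u, v ∈ ℂ³∖{0} satisfying q(u) = 0, q(v) = 0 and D(u,v) = 0, the 3×6 Jacobian matrix of the three polynomials (q(u), q(v), D(u,v)) with respect to the six variables (a₁,b₁,c₁,a₂,b₂,c₂), evaluated at (u,v), has rank 3. -/

import Mathlib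

set_option maxRecDepth 100000
set_option maxHeartbeats 4000000

open MvPolynomial

private lemma vec6_3 {α : Type*} (x0 x1 x2 x3 x4 x5 : α) : ![x0,x1,x2,x3,x4,x5] (3:Fin 6) = x3 := rfl
private lemma vec6_4 {α : Type*} (x0 x1 x2 x3 x4 x5 : α) : ![x0,x1,x2,x3,x4,x5] (4:Fin 6) = x4 := rfl
private lemma vec6_5 {α : Type*} (x0 x1 x2 x3 x4 x5 : α) : ![x0,x1,x2,x3,x4,x5] (5:Fin 6) = x5 := rfl

private lemma prod3 (a₁ b₁ c₁ a₂ b₂ c₂ : ℂ)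
    (e1 : a₁^2 + a₁*b₁ + b₁^2 + a₁*c₁ + b₁*c₁ + c₁^2 = 0)
    (e2 : a₂^2 + a₂*b₂ + b₂^2 + a₂*c₂ + b₂*c₂ + c₂^2 = 0)
    (e3 : a₁*b₁*a₂^2 + a₁^2*a₂*b₂ + b₁*c₁*b₂^2 + c₁^2*a₂*c₂ + b₁^2*b₂*c₂ + a₁*c₁*c₂^2 = 0)
    (c01 : -2*a₁^2*a₂^2 + 2*b₁^2*a₂^2 - a₁*c₁*a₂^2 + b₁*c₁*a₂^2 + 2*a₁^2*a₂*b₂ + 4*a₁*b₁*a₂*b₂ + 2*a₁*c₁*a₂*b₂ - 2*a₁*c₁*b₂^2 - b₁*c₁*b₂^2 - c₁^2*b₂^2 - 4*a₁*b₁*b₂*c₂ - 2*b₁^2*b₂*c₂ - 2*b₁*c₁*b₂*c₂ + a₁*c₁*c₂^2 + 2*b₁*c₁*c₂^2 + c₁^2*c₂^2 = 0)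
    (c02 : a₁*b₁*a₂^2 + b₁^2*a₂^2 + 2*b₁*c₁*a₂^2 + 2*a₁^2*a₂*b₂ + 2*a₁*b₁*a₂*b₂ + 4*a₁*c₁*a₂*b₂ - 2*a₁*b₁*b₂^2 - b₁^2*b₂^2 - b₁*c₁*b₂^2 - 4*a₁*c₁*a₂*c₂ - 2*b₁*c₁*a₂*c₂ - 2*c₁^2*a₂*c₂ - 2*a₁^2*c₂^2 - a₁*b₁*c₂^2 + b₁*c₁*c₂^2 + 2*c₁^2*c₂^2 = 0)
    (c12 : a₁^2*a₂^2 + a₁*b₁*a₂^2 + 2*a₁*c₁*a₂^2 - a₁*b₁*b₂^2 - 2*b₁^2*b₂^2 + a₁*c₁*b₂^2 + 2*c₁^2*b₂^2 - 2*a₁*c₁*a₂*c₂ - 4*b₁*c₁*a₂*c₂ - 2*c₁^2*a₂*c₂ + 2*a₁*b₁*b₂*c₂ + 2*b₁^2*b₂*c₂ + 4*b₁*c₁*b₂*c₂ - a₁^2*c₂^2 - 2*a₁*b₁*c₂^2 - a₁*c₁*c₂^2 = 0)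
    (d01 : -2*a₁^2*a₂^2 + 2*a₁*b₁*a₂^2 + 4*a₁*b₁*a₂*b₂ - 4*b₁*c₁*a₂*b₂ + 2*a₁^2*b₂^2 - 2*b₁*c₁*b₂^2 - a₁^2*a₂*c₂ + 2*a₁*b₁*a₂*c₂ - 2*b₁^2*a₂*c₂ + c₁^2*a₂*c₂ + a₁^2*b₂*c₂ - b₁^2*b₂*c₂ - 2*b₁*c₁*b₂*c₂ + 2*c₁^2*b₂*c₂ - b₁^2*c₂^2 + c₁^2*c₂^2 = 0)
    (d02 : 2*a₁*b₁*a₂^2 - 2*c₁^2*a₂^2 + a₁^2*a₂*b₂ + 2*a₁*b₁*a₂*b₂ - 2*b₁^2*a₂*b₂ - c₁^2*a₂*b₂ + a₁^2*b₂^2 - b₁^2*b₂^2 + 4*a₁*b₁*a₂*c₂ - 4*a₁*c₁*a₂*c₂ + 2*a₁^2*b₂*c₂ - b₁^2*b₂*c₂ - 2*a₁*c₁*b₂*c₂ + c₁^2*b₂*c₂ - 2*a₁*c₁*c₂^2 + 2*c₁^2*c₂^2 = 0)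
    (d12 : a₁^2*a₂^2 - c₁^2*a₂^2 + a₁^2*a₂*b₂ - b₁^2*a₂*b₂ + 2*b₁*c₁*a₂*b₂ - 2*c₁^2*a₂*b₂ - 2*b₁^2*b₂^2 + 2*b₁*c₁*b₂^2 + 2*a₁^2*a₂*c₂ + b₁^2*a₂*c₂ - 2*a₁*c₁*a₂*c₂ - c₁^2*a₂*c₂ - 4*a₁*c₁*b₂*c₂ + 4*b₁*c₁*b₂*c₂ + 2*b₁^2*c₂^2 - 2*a₁*c₁*c₂^2 = 0)
    : a₁ * a₂ = 0 ∧ a₁ * b₂ = 0 ∧ a₁ * c₂ = 0 := by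
  refine ⟨?_, ?_, ?_⟩
  · have h5 : (a₁ * a₂)^5 = 0 := by
      linear_combination (a₁^3*a₂^5 - a₁^2*b₁*a₂^5 + b₁^3*a₂^5 - a₁^2*c₁*a₂^5 + a₁*b₁*c₁*a₂^5 + b₁^2*c₁*a₂^5 + b₁*c₁^2*a₂^5 + c₁^3*a₂^5 + (4953542691719/1299438816480)*a₁^2*c₁*a₂^4*b₂ + (-4953542691719/1299438816480)*b₁^2*c₁*a₂^4*b₂ + (4953542691719/1299438816480)*a₁*c₁^2*a₂^4*b₂ + (-507393745116989/41148895855200)*b₁*c₁^2*a₂^4*b₂ + (-1168828562513/548651944736)*c₁^3*a₂^4*b₂ + (-56474218889/72615698568)*a₁^2*b₁*a₂^3*b₂^2 + (-136435745917/72615698568)*a₁*b₁^2*a₂^3*b₂^2 + (205561981663/72615698568)*b₁^3*a₂^3*b₂^2 + (7658299776949/7261569856800)*a₁*b₁*c₁*a₂^3*b₂^2 + (79169739340597/24689337513120)*b₁^2*c₁*a₂^3*b₂^2 + (70563464673367/8662925443200)*a₁*c₁^2*a₂^3*b₂^2 + (-21010778560223/3712682332800)*b₁*c₁^2*a₂^3*b₂^2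 + (-53085268050887/10077280617600)*c₁^3*a₂^3*b₂^2 + (7084924303/4034205476)*a₁^2*b₁*a₂^2*b₂^3 + (32325308294/9076962321)*b₁^3*a₂^2*b₂^3 + (4435240555283/1210261642800)*a₁^2*c₁*a₂^2*b₂^3 + (-50757574408301/24689337513120)*a₁*b₁*c₁*a₂^2*b₂^3 + (54077564751499/30861671891400)*b₁^2*c₁*a₂^2*b₂^3 + (8348860973947243/493786750262400)*a₁*c₁^2*a₂^2*b₂^3 + (4507690453526623/493786750262400)*b₁*c₁^2*a₂^2*b₂^3 + (-4830100388383/1913902132800)*c₁^3*a₂^2*b₂^3 + (-4343829517/4034205476)*a₁*b₁^2*a₂*b₂^4 + (5707557029/5186835612)*b₁^3*a₂*b₂^4 + (-16129432610299/3630784928400)*a₁*b₁*c₁*a₂*b₂^4 + (607739754218407/61723343782800)*b₁^2*c₁*a₂*b₂^4 + (517851632205769/23513654774400)*a₁*c₁^2*a₂*b₂^4 + (331891150942811/16459558342080)*b₁*c₁^2*a₂*b₂^4 + (-23962164495821/9682093142400)*c₁^3*a₂*b₂^4 + (1731822765521/697438912800)*b₁^2*c₁*b₂^5 + (-34959199962623/493786750262400)*a₁*c₁^2*b₂^5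 + (491434246981319/32919116684160)*b₁*c₁^2*b₂^5 + (-38140966649651/19751470010496)*c₁^3*b₂^5 + (1141/10797)*a₁^3*a₂^4*c₂ + (-2282/10797)*a₁^2*b₁*a₂^4*c₂ + (-544862706/1008551369)*a₁*b₁^2*a₂^4*c₂ + (2274075260/3025654107)*b₁^3*a₂^4*c₂ + (-1141/10797)*a₁^2*c₁*a₂^4*c₂ + (2282/10797)*a₁*b₁*c₁*a₂^4*c₂ + (-364932112931/348719456400)*b₁^2*c₁*a₂^4*c₂ + (2274075260/3025654107)*b₁*c₁^2*a₂^4*c₂ + (1141/10797)*c₁^3*a₂^4*c₂ + (-3233305973/6051308214)*a₁^2*b₁*a₂^3*b₂*c₂ + (-225119135/2017102738)*a₁*b₁^2*a₂^3*b₂*c₂ + (3908663378/3025654107)*b₁^3*a₂^3*b₂*c₂ + (-17504467426669/20574447927600)*a₁*b₁*c₁*a₂^3*b₂*c₂ + (2160788559222689/246893375131200)*b₁^2*c₁*a₂^3*b₂*c₂ + (-14188953880399/1175682738720)*a₁*c₁^2*a₂^3*b₂*c₂ + (-66789335796033/13716298618400)*b₁*c₁^2*a₂^3*b₂*c₂ +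 (-888114696506263/82297791710400)*c₁^3*a₂^3*b₂*c₂ + (-1141/10797)*a₁^3*a₂^2*b₂^2*c₂ + (-1314844547/6051308214)*a₁^2*b₁*a₂^2*b₂^2*c₂ + (-5474860861/5186835612)*a₁*b₁^2*a₂^2*b₂^2*c₂ + (29750593731337/8817620540400)*b₁^3*a₂^2*b₂^2*c₂ + (1141/10797)*a₁^2*c₁*a₂^2*b₂^2*c₂ + (493560625857407/41148895855200)*a₁*b₁*c₁*a₂^2*b₂^2*c₂ + (82863809153983/4047432379200)*b₁^2*c₁*a₂^2*b₂^2*c₂ + (-30351952326847/7261569856800)*a₁*c₁^2*a₂^2*b₂^2*c₂ + (2631654744473063/246893375131200)*b₁*c₁^2*a₂^2*b₂^2*c₂ + (-54950443099159/19751470010496)*c₁^3*a₂^2*b₂^2*c₂ + (20267189615809/30861671891400)*a₁*b₁^2*a₂*b₂^3*c₂ + (34533437837/10373671224)*b₁^3*a₂*b₂^3*c₂ + (2699073152493563/61723343782800)*a₁*b₁*c₁*a₂*b₂^3*c₂ + (1727721467310379/123446687565600)*b₁^2*c₁*a₂*b₂^3*c₂ + (1240474430400867/54865194473600)*a₁*c₁^2*a₂*b₂^3*c₂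 + (8735789459651621/493786750262400)*b₁*c₁^2*a₂*b₂^3*c₂ + (-115604215853941/49378675026240)*c₁^3*a₂*b₂^3*c₂ + (-8111770943/9076962321)*b₁^3*b₂^4*c₂ + (234393831468779/30861671891400)*b₁^2*c₁*b₂^4*c₂ + (292986281473471/164595583420800)*a₁*c₁^2*b₂^4*c₂ + (627940980887/234355363200)*b₁*c₁^2*b₂^4*c₂ + (-1445588856298747/164595583420800)*c₁^3*b₂^4*c₂ + (2798077833097/771541797285)*a₁^3*a₂^3*c₂^2 + (-3155015063572/771541797285)*a₁^2*b₁*a₂^3*c₂^2 + (-7181900935949/1543083594570)*a₁*b₁^2*a₂^3*c₂^2 + (1478031936/1008551369)*b₁^3*a₂^3*c₂^2 + (-5677690276799/3086167189140)*a₁^2*c₁*a₂^3*c₂^2 + (3553983879/2017102738)*a₁*b₁*c₁*a₂^3*c₂^2 + (1063403733667/518683561200)*b₁^2*c₁*a₂^3*c₂^2 + (-5677690276799/3086167189140)*a₁*c₁^2*a₂^3*c₂^2 + (1482259898299/232042645800)*b₁*c₁^2*a₂^3*c₂^2 + (5677690276799/1543083594570)*c₁^3*a₂^3*c₂^2 +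 (-3348883072837/771541797285)*a₁^3*a₂^2*b₂*c₂^2 + (-459271114741/110220256755)*a₁^2*b₁*a₂^2*b₂*c₂^2 + (33987862795/18153924642)*a₁*b₁^2*a₂^2*b₂*c₂^2 + (4282905888757/3857708986425)*b₁^3*a₂^2*b₂*c₂^2 + (-5812553949719/1299438816480)*a₁^2*c₁*a₂^2*b₂*c₂^2 + (-2066575855549/337747435200)*a₁*b₁*c₁*a₂^2*b₂*c₂^2 + (17094460480747/1645955834208)*b₁^2*c₁*a₂^2*b₂*c₂^2 + (-3006711775649731/123446687565600)*a₁*c₁^2*a₂^2*b₂*c₂^2 + (2555851438326797/246893375131200)*b₁*c₁^2*a₂^2*b₂*c₂^2 + (28213288389581/3527048216160)*c₁^3*a₂^2*b₂*c₂^2 + (-25246135555/72615698568)*a₁^2*b₁*a₂*b₂^2*c₂^2 + (27300789429437/30861671891400)*a₁*b₁^2*a₂*b₂^2*c₂^2 + (319773831/576315068)*b₁^3*a₂*b₂^2*c₂^2 + (-5612426095873/61723343782800)*a₁^2*c₁*a₂*b₂^2*c₂^2 + (4766514287729/224857354400)*a₁*b₁*c₁*a₂*b₂^2*c₂^2 +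 (251025900619481/61723343782800)*b₁^2*c₁*a₂*b₂^2*c₂^2 + (273870412426931/11756827387200)*a₁*c₁^2*a₂*b₂^2*c₂^2 + (1491170780106757/54865194473600)*b₁*c₁^2*a₂*b₂^2*c₂^2 + (169879438581659/17635241080800)*c₁^3*a₂*b₂^2*c₂^2 + (-143624051/1728945204)*a₁^2*b₁*b₂^3*c₂^2 + (-24437615093/36307849284)*a₁*b₁^2*b₂^3*c₂^2 + (4252879298/9076962321)*b₁^3*b₂^3*c₂^2 + (-25183730243771/20574447927600)*a₁*b₁*c₁*b₂^3*c₂^2 + (-161934269033249/12344668756560)*b₁^2*c₁*b₂^3*c₂^2 + (885950265105907/123446687565600)*a₁*c₁^2*b₂^3*c₂^2 + (-166025285512717/54865194473600)*b₁*c₁^2*b₂^3*c₂^2 + (-17300751281911/35270482161600)*c₁^3*b₂^3*c₂^2 + (1141/21594)*a₁*b₁^2*a₂^2*c₂^3 + (-4090873477919/1543083594570)*b₁^3*a₂^2*c₂^3 + (15416/10797)*a₁^2*c₁*a₂^2*c₂^3 + (-68562953/1008551369)*a₁*b₁*c₁*a₂^2*c₂^3 + (-189705996175567/61723343782800)*b₁^2*c₁*a₂^2*c₂^3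 + (-2882042046472/771541797285)*a₁*c₁^2*a₂^2*c₂^3 + (31105530421529/20574447927600)*b₁*c₁^2*a₂^2*c₂^3 + (6192337310609/3086167189140)*c₁^3*a₂^2*c₂^3 + (5514621055589/771541797285)*a₁^2*b₁*a₂*b₂*c₂^3 + (-14262484976917/1543083594570)*a₁*b₁^2*a₂*b₂*c₂^3 + (-10542503997173/3086167189140)*b₁^3*a₂*b₂*c₂^3 + (-187542070023547/41148895855200)*a₁*b₁*c₁*a₂*b₂*c₂^3 + (121302628316291/24689337513120)*b₁^2*c₁*a₂*b₂*c₂^3 + (-26494427545283/23513654774400)*a₁*c₁^2*a₂*b₂*c₂^3 + (8360807034050573/493786750262400)*b₁*c₁^2*a₂*b₂*c₂^3 + (30466686805467/3918942462400)*c₁^3*a₂*b₂*c₂^3 + (-143624051/864472602)*a₁^2*b₁*b₂^2*c₂^3 + (-1923662485/9076962321)*a₁*b₁^2*b₂^2*c₂^3 + (-1212822635/18153924642)*b₁^3*b₂^2*c₂^3 + (-13219846795471/41148895855200)*a₁*b₁*c₁*b₂^2*c₂^3 + (-25190612311807/1285902995475)*b₁^2*c₁*b₂^2*c₂^3 + (17127423696961/7837884924800)*a₁*c₁^2*b₂^2*c₂^3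 + (65142011920383/10973038894720)*b₁*c₁^2*b₂^2*c₂^3 + (1706262690005603/246893375131200)*c₁^3*b₂^2*c₂^3 + (7708/10797)*a₁^3*a₂*c₂^4 + (-3854/10797)*a₁^2*b₁*a₂*c₂^4 + (-3854/10797)*a₁*b₁^2*a₂*c₂^4 + (7708/10797)*b₁^3*a₂*c₂^4 + (-7717842014549/3086167189140)*a₁^2*c₁*a₂*c₂^4 + (-5514621055589/3086167189140)*a₁*b₁*c₁*a₂*c₂^4 + (-4252663664/1868139945)*b₁^2*c₁*a₂*c₂^4 + (-7708/10797)*a₁*c₁^2*a₂*c₂^4 + (2047935037699/464085291600)*b₁*c₁^2*a₂*c₂^4 + (1445333373601/3086167189140)*c₁^3*a₂*c₂^4 + (41102454689/36307849284)*a₁*b₁^2*b₂*c₂^4 + (827736661/3457890408)*b₁^3*b₂*c₂^4 + (143624051/864472602)*a₁*b₁*c₁*b₂*c₂^4 + (-15348173572913/30861671891400)*b₁^2*c₁*b₂*c₂^4 + (445493534722679/54865194473600)*b₁*c₁^2*b₂*c₂^4 + (1116658996441573/98757350052480)*c₁^3*b₂*c₂^4 + (-8818517612743/1543083594570)*b₁^2*c₁*c₂^5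 + (-914113247899/464085291600)*b₁*c₁^2*c₂^5 + (-1314409537499/3086167189140)*c₁^3*c₂^5) * e1 + (-a₁*b₁^4*a₂^3 - b₁^5*a₂^3 - 3*a₁*b₁^3*c₁*a₂^3 - 2*b₁^4*c₁*a₂^3 - 3*a₁*b₁^2*c₁^2*a₂^3 - 3*b₁^3*c₁^2*a₂^3 - 3*a₁*b₁*c₁^3*a₂^3 - 3*b₁^2*c₁^3*a₂^3 - a₁*c₁^4*a₂^3 - 2*b₁*c₁^4*a₂^3 - c₁^5*a₂^3 + (-17680161563/24205232856)*a₁*b₁^4*a₂^2*b₂ + (-17680161563/24205232856)*b₁^5*a₂^2*b₂ + (4681605598793/1645955834208)*a₁*b₁^3*c₁*a₂^2*b₂ + (58049781554141/24689337513120)*b₁^4*c₁*a₂^2*b₂ + (140671939635193/6172334378280)*a₁*b₁^2*c₁^2*a₂^2*b₂ + (337877153061601/15430835945700)*b₁^3*c₁^2*a₂^2*b₂ + (1019353555359283/82297791710400)*a₁*b₁*c₁^3*a₂^2*b₂ + (1558766267714707/61723343782800)*b₁^2*c₁^3*a₂^2*b₂ + (2266132451985/1097303889472)*a₁*c₁^4*a₂^2*b₂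 + (483705055604857/35270482161600)*b₁*c₁^4*a₂^2*b₂ + (43385915999359/9875735005248)*c₁^5*a₂^2*b₂ + (-429216775/18153924642)*a₁*b₁^4*a₂*b₂^2 + (-5707557029/5186835612)*b₁^5*a₂*b₂^2 + (446545034813431/123446687565600)*a₁*b₁^3*c₁*a₂*b₂^2 + (-1867833747931/771541797285)*b₁^4*c₁*a₂*b₂^2 + (10290422240526707/493786750262400)*a₁*b₁^2*c₁^2*a₂*b₂^2 + (-157015308043231/29046279427200)*b₁^3*c₁^2*a₂*b₂^2 + (85757085558437/98757350052480)*a₁*b₁*c₁^3*a₂*b₂^2 + (-323682223031387/23513654774400)*b₁^2*c₁^3*a₂*b₂^2 + (-511048715645449/49378675026240)*a₁*c₁^4*a₂*b₂^2 + (-16424755275991/27432597236800)*b₁*c₁^4*a₂*b₂^2 + (618725378254919/246893375131200)*c₁^5*a₂*b₂^2 + (-250469795087027/41148895855200)*a₁*b₁^3*c₁*b₂^3 + (-35651840503561/30861671891400)*b₁^4*c₁*b₂^3 + (-245824794097051/19751470010496)*a₁*b₁^2*c₁^2*b₂^3 + (-335662334814659/27432597236800)*b₁^3*c₁^2*b₂^3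 + (-3053831898495773/493786750262400)*a₁*b₁*c₁^3*b₂^3 + (-110613739226281/10077280617600)*b₁^2*c₁^3*b₂^3 + (-33404204225603/5741706398400)*a₁*c₁^4*b₂^3 + (-776048287038739/164595583420800)*b₁*c₁^4*b₂^3 + (8593850578963/5486519447360)*c₁^5*b₂^3 + (8515/10797)*a₁*b₁^4*a₂^2*c₂ + (751578847/3025654107)*b₁^5*a₂^2*c₂ + (74557313314529/20574447927600)*a₁*b₁^3*c₁*a₂^2*c₂ + (15738726250043/6858149309200)*b₁^4*c₁*a₂^2*c₂ + (74557313314529/20574447927600)*a₁*b₁^2*c₁^2*a₂^2*c₂ + (52326914909729/20574447927600)*b₁^3*c₁^2*a₂^2*c₂ + (74557313314529/20574447927600)*a₁*b₁*c₁^3*a₂^2*c₂ + (65616370394929/20574447927600)*b₁^2*c₁^3*a₂^2*c₂ + (9656/10797)*a₁*c₁^4*a₂^2*c₂ + (1152496461/1008551369)*b₁*c₁^4*a₂^2*c₂ + (9656/10797)*c₁^5*a₂^2*c₂ + (-4373757653/6051308214)*a₁*b₁^4*a₂*b₂*c₂ + (4603456619/24205232856)*b₁^5*a₂*b₂*c₂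 + (3031426068373/382187887200)*a₁*b₁^3*c₁*a₂*b₂*c₂ + (-158726796655657/41148895855200)*b₁^4*c₁*a₂*b₂*c₂ + (566075450682599/25988776329600)*a₁*b₁^2*c₁^2*a₂*b₂*c₂ + (-2675296539739387/164595583420800)*b₁^3*c₁^2*a₂*b₂*c₂ + (2937457767118913/246893375131200)*a₁*b₁*c₁^3*a₂*b₂*c₂ + (-1991556711843497/246893375131200)*b₁^2*c₁^3*a₂*b₂*c₂ + (8724652058226899/493786750262400)*a₁*c₁^4*a₂*b₂*c₂ + (890077329766901/164595583420800)*b₁*c₁^4*a₂*b₂*c₂ + (802893632464207/123446687565600)*c₁^5*a₂*b₂*c₂ + (-142440409841/72615698568)*a₁*b₁^4*b₂^2*c₂ + (17426915593/72615698568)*b₁^5*b₂^2*c₂ + (-27466915694513/13716298618400)*a₁*b₁^3*c₁*b₂^2*c₂ + (378807690477739/61723343782800)*b₁^4*c₁*b₂^2*c₂ + (-6391556658992119/493786750262400)*a₁*b₁^2*c₁^2*b₂^2*c₂ + (-135627185819271/54865194473600)*b₁^3*c₁^2*b₂^2*c₂ + (-3845797460153539/246893375131200)*a₁*b₁*c₁^3*b₂^2*c₂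 + (-668756044415639/164595583420800)*b₁^2*c₁^3*b₂^2*c₂ + (357170691414643/54865194473600)*a₁*c₁^4*b₂^2*c₂ + (94954500024743/14108192864640)*b₁*c₁^4*b₂^2*c₂ + (2699486179981421/493786750262400)*c₁^5*b₂^2*c₂ + (-3854/10797)*a₁*b₁^4*a₂*c₂^2 + (-7708/10797)*b₁^5*a₂*c₂^2 + (-14689/7198)*a₁*b₁^3*c₁*a₂*c₂^2 + (-3133821883/3025654107)*b₁^4*c₁*a₂*c₂^2 + (-28135081745073/3429074654600)*a₁*b₁^2*c₁^2*a₂*c₂^2 + (-11844195347317/1469603423400)*b₁^3*c₁^2*a₂*c₂^2 + (-235617861519367/20574447927600)*a₁*b₁*c₁^3*a₂*c₂^2 + (-42200714897903/3429074654600)*b₁^2*c₁^3*a₂*c₂^2 + (-5351551834379/3086167189140)*a₁*c₁^4*a₂*c₂^2 + (-284237419933547/30861671891400)*b₁*c₁^4*a₂*c₂^2 + (-5514621055589/1543083594570)*c₁^5*a₂*c₂^2 + (-2625836567/36307849284)*a₁*b₁^4*b₂*c₂^2 + (217777325/175824936)*b₁^5*b₂*c₂^2 + (-60287450089/48658528800)*a₁*b₁^3*c₁*b₂*c₂^2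 + (-13339625872967/10287223963800)*b₁^4*c₁*b₂*c₂^2 + (-373759317992231/246893375131200)*a₁*b₁^2*c₁^2*b₂*c₂^2 + (-28474007063833/3227364380800)*b₁^3*c₁^2*b₂*c₂^2 + (180847817898227/24689337513120)*a₁*b₁*c₁^3*b₂*c₂^2 + (-314700628237211/70540964323200)*b₁^2*c₁^3*b₂*c₂^2 + (213899583438329/246893375131200)*a₁*c₁^4*b₂*c₂^2 + (542695934042371/164595583420800)*b₁*c₁^4*b₂*c₂^2 + (-798891472718729/98757350052480)*c₁^5*b₂*c₂^2 + (6141458570249/3086167189140)*a₁*b₁^3*c₁*c₂^3 + (2004669433657/771541797285)*b₁^4*c₁*c₂^3 + (234867898736147/61723343782800)*a₁*b₁^2*c₁^2*c₂^3 + (359068955717707/61723343782800)*b₁^3*c₁^2*c₂^3 + (211775253174347/61723343782800)*a₁*b₁*c₁^3*c₂^3 + (8374426027909/979735615600)*b₁^2*c₁^3*c₂^3 + (-8306/10797)*a₁*c₁^4*c₂^3 + (147865252720547/61723343782800)*b₁*c₁^4*c₂^3 + (-511365485251/3086167189140)*c₁^5*c₂^3) * e2 + ((-1451620691/545982696)*b₁^3*a₂*b₂^2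 + (-134174890575203/6858149309200)*b₁^2*c₁*a₂*b₂^2 + (-1130823520460813/123446687565600)*a₁*c₁^2*a₂*b₂^2 + (-57972621211373/1913902132800)*b₁*c₁^2*a₂*b₂^2 + (-202571856387479/10287223963800)*c₁^3*a₂*b₂^2 + (23037175265/8068410952)*a₁*b₁^2*b₂^3 + (2260345331/3457890408)*b₁^3*b₂^3 + (-29643606536577/3429074654600)*b₁^2*c₁*b₂^3 + (-61697475952373/2468933751312)*a₁*c₁^2*b₂^3 + (-1294715346265853/49378675026240)*b₁*c₁^2*b₂^3 + (-32016032164729/1452313971360)*c₁^3*b₂^3 + (617011153/1273959624)*b₁^3*a₂*b₂*c₂ + (-196406931173573/13716298618400)*a₁*b₁*c₁*a₂*b₂*c₂ + (-134397153463001/7054096432320)*b₁^2*c₁*a₂*b₂*c₂ + (-1636740609762823/246893375131200)*a₁*c₁^2*a₂*b₂*c₂ + (-942015898703881/41148895855200)*b₁*c₁^2*a₂*b₂*c₂ + (-803192007749681/82297791710400)*c₁^3*a₂*b₂*c₂ + (-3675394562087/4408810270200)*a₁*b₁^2*b₂^2*c₂ + (-204880789873159/61723343782800)*b₁^3*b₂^2*c₂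 + (-73059245438699/2057444792760)*a₁*b₁*c₁*b₂^2*c₂ + (-1828340613933569/82297791710400)*b₁^2*c₁*b₂^2*c₂ + (-344464098456421/30861671891400)*a₁*c₁^2*b₂^2*c₂ + (-4505097854045693/123446687565600)*b₁*c₁^2*b₂^2*c₂ + (-610147667517509/82297791710400)*c₁^3*b₂^2*c₂ + (11230542201013/1543083594570)*a₁*b₁^2*a₂*c₂^2 + (828207965147/220440513510)*b₁^3*a₂*c₂^2 + (37738915105993/61723343782800)*a₁*b₁*c₁*a₂*c₂^2 + (6201845/49600887)*b₁^2*c₁*a₂*c₂^2 + (5150752311329/1543083594570)*a₁*c₁^2*a₂*c₂^2 + (6645673312829/3086167189140)*b₁*c₁^2*a₂*c₂^2 + (9055/10797)*c₁^3*a₂*c₂^2 + (-1176966263497/1469603423400)*a₁*b₁^2*b₂*c₂^2 + (-11227405092251/5143611981900)*b₁^3*b₂*c₂^2 + (-89955563917183/9875735005248)*a₁*b₁*c₁*b₂*c₂^2 + (-46872338094961/13716298618400)*b₁^2*c₁*b₂*c₂^2 + (-113358214065709/41148895855200)*a₁*c₁^2*b₂*c₂^2 + (-7012061830741/6172334378280)*b₁*c₁^2*b₂*c₂^2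 + (607711572544561/123446687565600)*c₁^3*b₂*c₂^2 + (8818517612743/1543083594570)*a₁*b₁^2*c₂^3 + (1671599477452/771541797285)*b₁^3*c₂^3 + (914113247899/464085291600)*a₁*b₁*c₁*c₂^3 + (3831954163619/1028722396380)*b₁^2*c₁*c₂^3 + (2947674270179/1543083594570)*a₁*c₁^2*c₂^3 + (1491594495757/771541797285)*b₁*c₁^2*c₂^3 + (4134749600039/1543083594570)*c₁^3*c₂^3) * e3 + ((135637336972237/49378675026240)*c₁^3*a₂^2*b₂ + (34233800169133/493786750262400)*a₁*c₁^2*a₂*b₂^2 + (-3424115562029893/493786750262400)*b₁*c₁^2*a₂*b₂^2 + (-101292804814339/9875735005248)*b₁*c₁^2*b₂^3 + (-36015522826921/98757350052480)*c₁^3*b₂^3 + (-30871990452809/82297791710400)*a₁*b₁*c₁*a₂*b₂*c₂ + (-265243575013301/98757350052480)*b₁^2*c₁*a₂*b₂*c₂ + (255251672437877/246893375131200)*a₁*c₁^2*a₂*b₂*c₂ + (-18352543363387/4114889585520)*b₁*c₁^2*a₂*b₂*c₂ + (-2842945984859909/493786750262400)*c₁^3*a₂*b₂*c₂ + (-137133716599909/123446687565600)*b₁^3*b₂^2*c₂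 + (-507295789332593/123446687565600)*a₁*b₁*c₁*b₂^2*c₂ + (-40757454211451/3227364380800)*b₁^2*c₁*b₂^2*c₂ + (-4689790204325/1645955834208)*a₁*c₁^2*b₂^2*c₂ + (-300114660631151/27432597236800)*b₁*c₁^2*b₂^2*c₂ + (-3825636050053/1161851177088)*c₁^3*b₂^2*c₂ + (5514621055589/3086167189140)*a₁^3*a₂*c₂^2 + (1203/3599)*a₁*b₁*c₁*a₂*c₂^2 + (-4281812026529/3086167189140)*b₁^2*c₁*a₂*c₂^2 + (-427601225381/489867807800)*b₁^3*b₂*c₂^2 + (-51128248908571/9682093142400)*a₁*b₁*c₁*b₂*c₂^2 + (-204836006572663/35270482161600)*b₁^2*c₁*b₂*c₂^2 + (-645017202437051/70540964323200)*a₁*c₁^2*b₂*c₂^2 + (-4575801519410309/493786750262400)*b₁*c₁^2*b₂*c₂^2 + (-129890959144193/25988776329600)*c₁^3*b₂*c₂^2 + (4809178745429/3086167189140)*b₁^3*c₂^3 + (3335/21594)*b₁^2*c₁*c₂^3 + (-4580939002859/3086167189140)*a₁*c₁^2*c₂^3) * c01 + ((41885394419/24205232856)*b₁^3*a₂^2*b₂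 + (-42488671341467/15430835945700)*b₁*c₁^2*a₂^2*b₂ + (-7084924303/8068410952)*a₁^2*b₁*a₂*b₂^2 + (-4435240555283/2420523285600)*a₁^2*c₁*a₂*b₂^2 + (-20275237890907/32919116684160)*a₁*c₁^2*a₂*b₂^2 + (-7700664517447/20574447927600)*b₁^2*c₁*b₂^3 + (3854/10797)*a₁^3*a₂*c₂^2 + (41102454689/72615698568)*a₁*b₁^2*b₂*c₂^2 + (29242462285/72615698568)*b₁^3*b₂*c₂^2) * c02 + ((-4953542691719/1299438816480)*a₁^2*c₁*a₂^2*b₂ + (56474218889/72615698568)*a₁^2*b₁*a₂*b₂^2 + (-56171444518009/23513654774400)*a₁*c₁^2*a₂*b₂^2 + (1750544850668273/493786750262400)*a₁*c₁^2*b₂^3) * c12 + ((-581008123924357/246893375131200)*b₁*c₁^2*a₂^2*b₂ + (-50050016161/36307849284)*a₁*b₁^2*a₂*b₂^2 + (346756193895683/123446687565600)*a₁*c₁^2*a₂*b₂^2 + (574799241773/276631232640)*c₁^3*a₂*b₂^2 + (-149339053100393/61723343782800)*b₁^2*c₁*b₂^3 + (186497288496569/164595583420800)*a₁*c₁^2*b₂^3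 + (-805911663361451/123446687565600)*b₁*c₁^2*b₂^3 + (-387722100948503/246893375131200)*c₁^3*b₂^3 + (1141/21594)*a₁^3*a₂^2*c₂ + (-133986453075527/41148895855200)*a₁*c₁^2*a₂*b₂*c₂ + (-241510777403099/98757350052480)*b₁*c₁^2*a₂*b₂*c₂ + (-1173983869127327/493786750262400)*c₁^3*a₂*b₂*c₂ + (8111770943/18153924642)*b₁^3*b₂^2*c₂ + (-7628402409269/1543083594570)*b₁^2*c₁*b₂^2*c₂ + (364799176061731/493786750262400)*a₁*c₁^2*b₂^2*c₂ + (-3450462472559/412520259200)*b₁*c₁^2*b₂^2*c₂ + (-55388692783691/23513654774400)*c₁^3*b₂^2*c₂ + (6863430041/18153924642)*a₁*b₁^2*b₂*c₂^2 + (19168610423/36307849284)*b₁^3*b₂*c₂^2 + (8964285483557/13716298618400)*a₁*b₁*c₁*b₂*c₂^2 + (-17127423696961/7837884924800)*a₁*c₁^2*b₂*c₂^2 + (-384640107405637/82297791710400)*b₁*c₁^2*b₂*c₂^2 + (376661075485607/493786750262400)*c₁^3*b₂*c₂^2 + (12775/21594)*c₁^3*c₂^3) * d01 + ((48980619850063/24689337513120)*b₁^2*c₁*a₂^2*b₂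 + (656382466783/1039551053184)*c₁^3*a₂^2*b₂ + (-5931950157769/12994388164800)*a₁*c₁^2*a₂*b₂^2 + (2448421051901/25988776329600)*b₁*c₁^2*a₂*b₂^2 + (58164716580871/24689337513120)*b₁^2*c₁*b₂^3 + (-154860647288113/70540964323200)*a₁*c₁^2*b₂^3 + (861283652802719/493786750262400)*b₁*c₁^2*b₂^3 + (788826919329637/493786750262400)*c₁^3*b₂^3 + (1954331689/6051308214)*a₁^2*b₁*a₂^2*c₂ + (11606816716043/13716298618400)*a₁*b₁*c₁*a₂^2*c₂ + (143624051/1728945204)*a₁^2*b₁*b₂*c₂^2) * d02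
    exact pow_eq_zero_iff (by norm_num : (5:ℕ) ≠ 0) |>.mp h5
  · have h5 : (a₁ * b₂)^5 = 0 := by
      linear_combination ((19744312667/13720109760)*a₁^2*c₁*a₂^4*b₂ + (-19744312667/13720109760)*b₁^2*c₁*a₂^4*b₂ + (19744312667/13720109760)*a₁*c₁^2*a₂^4*b₂ + (74310933541/68600548800)*b₁*c₁^2*a₂^4*b₂ + (3704911873/914673984)*c₁^3*a₂^4*b₂ + (-49690285/80706528)*a₁^2*b₁*a₂^3*b₂^2 + (24194551/80706528)*a₁*b₁^2*a₂^3*b₂^2 + (-33642757/80706528)*b₁^3*a₂^3*b₂^2 + (2750900041/1345108800)*a₁*b₁*c₁*a₂^3*b₂^2 + (10089382999/13720109760)*b₁^2*c₁*a₂^3*b₂^2 + (-335491209979/91467398400)*a₁*c₁^2*a₂^3*b₂^2 + (24401139829/2063174400)*b₁*c₁^2*a₂^3*b₂^2 + (4404665851/687724800)*c₁^3*a₂^3*b₂^2 + (13213681/13451088)*a₁^2*b₁*a₂^2*b₂^3 + (6511049/5044158)*b₁^3*a₂^2*b₂^3 + (10737214373/2017663200)*a₁^2*c₁*a₂^2*b₂^3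 + (-6266358047/13720109760)*a₁*b₁*c₁*a₂^2*b₂^3 + (-6814402601/8575068600)*b₁^2*c₁*a₂^2*b₂^3 + (1020640855337/91467398400)*a₁*c₁^2*a₂^2*b₂^3 + (3380964598871/274402195200)*b₁*c₁^2*a₂^2*b₂^3 + (14418401027/3190723200)*c₁^3*a₂^2*b₂^3 + (1056313/13451088)*a₁*b₁^2*a₂*b₂^4 + (-717803/5764752)*b₁^3*a₂*b₂^4 + (-1996578583/336277200)*a₁*b₁*c₁*a₂*b₂^4 + (78248005289/34300274400)*b₁^2*c₁*a₂*b₂^4 + (415796722139/39200313600)*a₁*c₁^2*a₂*b₂^4 + (398412630911/27440219520)*b₁*c₁^2*a₂*b₂^4 + (-82214253251/16141305600)*c₁^3*a₂*b₂^4 + a₁^3*b₂^5 - a₁^2*b₁*b₂^5 + b₁^3*b₂^5 - a₁^2*c₁*b₂^5 + a₁*b₁*c₁*b₂^5 + (46910461303/22866849600)*b₁^2*c₁*b₂^5 + (297065081143/91467398400)*a₁*c₁^2*b₂^5 + (1659149741/6097826560)*b₁*c₁^2*b₂^5 + (-36431048407/10976087808)*c₁^3*b₂^5 + (-151009/2241848)*a₁*b₁^2*a₂^4*c₂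 + (151009/2241848)*b₁^3*a₂^4*c₂ + (-146328296599/34300274400)*b₁^2*c₁*a₂^4*c₂ + (151009/2241848)*b₁*c₁^2*a₂^4*c₂ + (-151009/4483696)*a₁^2*b₁*a₂^3*b₂*c₂ + (-151009/4483696)*a₁*b₁^2*a₂^3*b₂*c₂ + (151009/1120924)*b₁^3*a₂^3*b₂*c₂ + (865400577/1905570800)*a₁*b₁*c₁*a₂^3*b₂*c₂ + (-830385610547/137201097600)*b₁^2*c₁*a₂^3*b₂*c₂ + (-734229341/217779520)*a₁*c₁^2*a₂^3*b₂*c₂ + (32610575551/11433424800)*b₁*c₁^2*a₂^3*b₂*c₂ + (-367282158403/137201097600)*c₁^3*a₂^3*b₂*c₂ + (-151009/4483696)*a₁^2*b₁*a₂^2*b₂^2*c₂ + (-178753/2882376)*a₁*b₁^2*a₂^2*b₂^2*c₂ + (9542335237/2450019600)*b₁^3*a₂^2*b₂^2*c₂ + (-5271501087/7622283200)*a₁*b₁*c₁*a₂^2*b₂^2*c₂ + (-629763611849/137201097600)*b₁^2*c₁*a₂^2*b₂^2*c₂ + (1996328377/1345108800)*a₁*c₁^2*a₂^2*b₂^2*c₂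 + (757548149867/45733699200)*b₁*c₁^2*a₂^2*b₂^2*c₂ + (102768706349/10976087808)*c₁^3*a₂^2*b₂^2*c₂ + (12919389319/1805277600)*a₁*b₁^2*a₂*b₂^3*c₂ + (15240973/11529504)*b₁^3*a₂*b₂^3*c₂ + (-125088190949/34300274400)*a₁*b₁*c₁*a₂*b₂^3*c₂ + (127417327411/22866849600)*b₁^2*c₁*a₂*b₂^3*c₂ + (743344307977/91467398400)*a₁*c₁^2*a₂*b₂^3*c₂ + (2465261981017/274402195200)*b₁*c₁^2*a₂*b₂^3*c₂ + (-94053352207/27440219520)*c₁^3*a₂*b₂^3*c₂ + (3349105/5044158)*b₁^3*b₂^4*c₂ + (39600931879/8575068600)*b₁^2*c₁*b₂^4*c₂ + (739605961501/274402195200)*a₁*c₁^2*b₂^4*c₂ + (982748899/130233600)*b₁*c₁^2*b₂^4*c₂ + (-68460210557/274402195200)*c₁^3*b₂^4*c₂ + (-5774588693/3430027440)*a₁^3*a₂^3*c₂^2 + (5774588693/3430027440)*a₁^2*b₁*a₂^3*c₂^2 + (5312501153/3430027440)*a₁*b₁^2*a₂^3*c₂^2 + (151009/2241848)*b₁^3*a₂^3*c₂^2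 + (5774588693/6860054880)*a₁^2*c₁*a₂^3*c₂^2 + (151009/1120924)*a₁*b₁*c₁*a₂^3*c₂^2 + (-194859999/32026400)*b₁^2*c₁*a₂^3*c₂^2 + (5774588693/6860054880)*a₁*c₁^2*a₂^3*c₂^2 + (2796556027/408336600)*b₁*c₁^2*a₂^3*c₂^2 + (-5774588693/3430027440)*c₁^3*a₂^3*c₂^2 + (5774588693/3430027440)*a₁^3*a₂^2*b₂*c₂^2 + (791934989/490003920)*a₁^2*b₁*a₂^2*b₂*c₂^2 + (6415057/10088316)*a₁*b₁^2*a₂^2*b₂*c₂^2 + (86391345583/11433424800)*b₁^3*a₂^2*b₂*c₂^2 + (-19744312667/13720109760)*a₁^2*c₁*a₂^2*b₂*c₂^2 + (-611842373/187689600)*a₁*b₁*c₁*a₂^2*b₂*c₂^2 + (-332895901/144422208)*b₁^2*c₁*a₂^2*b₂*c₂^2 + (-150309757081/34300274400)*a₁*c₁^2*a₂^2*b₂*c₂^2 + (1551504922669/137201097600)*b₁*c₁^2*a₂^2*b₂*c₂^2 + (817618541/163334640)*c₁^3*a₂^2*b₂*c₂^2 + (-24080225/80706528)*a₁^2*b₁*a₂*b₂^2*c₂^2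 + (16772104639/1071883575)*a₁*b₁^2*a₂*b₂^2*c₂^2 + (-2574933/1281056)*b₁^3*a₂*b₂^2*c₂^2 + (-80092843757/11433424800)*a₁^2*c₁*a₂*b₂^2*c₂^2 + (24828260717/68600548800)*a₁*b₁*c₁*a₂*b₂^2*c₂^2 + (107609451829/11433424800)*b₁^2*c₁*a₂*b₂^2*c₂^2 + (37892936023/2800022400)*a₁*c₁^2*a₂*b₂^2*c₂^2 + (5191225609901/274402195200)*b₁*c₁^2*a₂*b₂^2*c₂^2 + (122452562093/9800078400)*c₁^3*a₂*b₂^2*c₂^2 + (32807/480396)*a₁^2*b₁*b₂^3*c₂^2 + (-2863055/5044158)*a₁*b₁^2*b₂^3*c₂^2 + (68958613/40353264)*b₁^3*b₂^3*c₂^2 + (49024647599/34300274400)*a₁*b₁*c₁*b₂^3*c₂^2 + (1672339911/95278540)*b₁^2*c₁*b₂^3*c₂^2 + (392770802089/68600548800)*a₁*c₁^2*b₂^3*c₂^2 + (1083105924619/274402195200)*b₁*c₁^2*b₂^3*c₂^2 + (99979272653/19600156800)*c₁^3*b₂^3*c₂^2 + (6005632463/3430027440)*b₁^3*a₂^2*c₂^3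 + (151009/2241848)*a₁*b₁*c₁*a₂^2*c₂^3 + (-19960965139/5716712400)*b₁^2*c₁*a₂^2*c₂^3 + (5774588693/3430027440)*a₁*c₁^2*a₂^2*c₂^3 + (144017858899/34300274400)*b₁*c₁^2*a₂^2*c₂^3 + (-5774588693/6860054880)*c₁^3*a₂^2*c₂^3 + (-5774588693/1715013720)*a₁^2*b₁*a₂*b₂*c₂^3 + (19348095479/3430027440)*a₁*b₁^2*a₂*b₂*c₂^3 + (72280913/95278540)*b₁^3*a₂*b₂*c₂^3 + (-9975018853/3610555200)*a₁*b₁*c₁*a₂*b₂*c₂^3 + (94118200787/13720109760)*b₁^2*c₁*a₂*b₂*c₂^3 + (-37020673691/13066771200)*a₁*c₁^2*a₂*b₂*c₂^3 + (1889090504221/274402195200)*b₁*c₁^2*a₂*b₂*c₂^3 + (203765022331/19600156800)*c₁^3*a₂*b₂*c₂^3 + (32807/240198)*a₁^2*b₁*b₂^2*c₂^3 + (-7792951/20176632)*a₁*b₁^2*b₂^2*c₂^3 + (3395653/40353264)*b₁^3*b₂^2*c₂^3 + (32627708999/68600548800)*a₁*b₁*c₁*b₂^2*c₂^3 + (423116178553/34300274400)*b₁^2*c₁*b₂^2*c₂^3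 + (37020673691/13066771200)*a₁*c₁^2*b₂^2*c₂^3 + (-100258026241/54880439040)*b₁*c₁^2*b₂^2*c₂^3 + (178830219359/15244566400)*c₁^3*b₂^2*c₂^3 + (5774588693/6860054880)*a₁^2*c₁*a₂*c₂^4 + (5774588693/6860054880)*a₁*b₁*c₁*a₂*c₂^4 + (791934989/490003920)*b₁^2*c₁*a₂*c₂^4 + (2796556027/816673200)*b₁*c₁^2*a₂*c₂^4 + (5774588693/6860054880)*c₁^3*a₂*c₂^4 + (46015099/40353264)*a₁*b₁^2*b₂*c₂^4 + (-949663/3843168)*b₁^3*b₂*c₂^4 + (-32807/240198)*a₁*b₁*c₁*b₂*c₂^4 + (6959499359/476392700)*b₁^2*c₁*b₂*c₂^4 + (179159000647/274402195200)*b₁*c₁^2*b₂*c₂^4 + (55116987389/6097826560)*c₁^3*b₂*c₂^4 + (2945055289/857506860)*b₁^2*c₁*c₂^5 + (-2796556027/816673200)*b₁*c₁^2*c₂^5 + (5774588693/6860054880)*c₁^3*c₂^5) * e1 + ((-19037671/26902176)*a₁*b₁^4*a₂^2*b₂ + (-19037671/26902176)*b₁^5*a₂^2*b₂ + (-279912823/304891328)*a₁*b₁^3*c₁*a₂^2*b₂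 + (17152013/722111040)*b₁^4*c₁*a₂^2*b₂ + (-14321678057/4573369920)*a₁*b₁^2*c₁^2*a₂^2*b₂ + (8192129089/3610555200)*b₁^3*c₁^2*a₂^2*b₂ + (-412181060027/137201097600)*a₁*b₁*c₁^3*a₂^2*b₂ + (-152293841761/34300274400)*b₁^2*c₁^3*a₂^2*b₂ + (-3704911873/1829347968)*a₁*c₁^4*a₂^2*b₂ + (-168524309311/19600156800)*b₁*c₁^4*a₂^2*b₂ + (-41814299825/5488043904)*c₁^5*a₂^2*b₂ + (21104473/20176632)*a₁*b₁^4*a₂*b₂^2 + (6482555/5764752)*b₁^5*a₂*b₂^2 + (78255891929/22866849600)*a₁*b₁^3*c₁*a₂*b₂^2 + (13822193573/6860054880)*b₁^4*c₁*a₂*b₂^2 + (617989856213/91467398400)*a₁*b₁^2*c₁^2*a₂*b₂^2 + (-12048537743/1793478400)*b₁^3*c₁^2*a₂*b₂^2 + (-106717995899/6097826560)*a₁*b₁*c₁^3*a₂*b₂^2 + (-22414135533/4355590400)*b₁^2*c₁^3*a₂*b₂^2 + (-27431843447/3048913280)*a₁*c₁^4*a₂*b₂^2 + (-950750494363/137201097600)*b₁*c₁^4*a₂*b₂^2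 + (-78183698987/137201097600)*c₁^5*a₂*b₂^2 - a₁*b₁^4*b₂^3 - b₁^5*b₂^3 + (-55098308287/68600548800)*a₁*b₁^3*c₁*b₂^3 + (-4088919983/1905570800)*b₁^4*c₁*b₂^3 + (-85907342011/10976087808)*a₁*b₁^2*c₁^2*b₂^3 + (17190186113/137201097600)*b₁^3*c₁^2*b₂^3 + (-203399010869/30489132800)*a₁*b₁*c₁^3*b₂^3 + (-1515186887/687724800)*b₁^2*c₁^3*b₂^3 + (11732104369/3190723200)*a₁*c₁^4*b₂^3 + (1517661846497/91467398400)*b₁*c₁^4*b₂^3 + (115029647129/27440219520)*c₁^5*b₂^3 + (-151009/2241848)*b₁^5*a₂^2*c₂ + (146328296599/34300274400)*a₁*b₁^3*c₁*a₂^2*c₂ + (144017858899/34300274400)*b₁^4*c₁*a₂^2*c₂ + (146328296599/34300274400)*a₁*b₁^2*c₁^2*a₂^2*c₂ + (141707421199/34300274400)*b₁^3*c₁^2*a₂^2*c₂ + (146328296599/34300274400)*a₁*b₁*c₁^3*a₂^2*c₂ + (144017858899/34300274400)*b₁^2*c₁^3*a₂^2*c₂ + (-151009/2241848)*b₁*c₁^4*a₂^2*c₂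 + (26550287/26902176)*a₁*b₁^4*a₂*b₂*c₂ + (17225563/26902176)*b₁^5*a₂*b₂*c₂ + (32958410899/4035326400)*a₁*b₁^3*c₁*a₂*b₂*c₂ + (-4446896789/22866849600)*b₁^4*c₁*a₂*b₂*c₂ + (2673927832337/274402195200)*a₁*b₁^2*c₁^2*a₂*b₂*c₂ + (1664218876903/274402195200)*b₁^3*c₁^2*a₂*b₂*c₂ + (52004282489/15244566400)*a₁*b₁*c₁^3*a₂*b₂*c₂ + (69753452009/15244566400)*b₁^2*c₁^3*a₂*b₂*c₂ + (332997227623/274402195200)*a₁*c₁^4*a₂*b₂*c₂ + (660257613031/274402195200)*b₁*c₁^4*a₂*b₂*c₂ + (117719971169/11433424800)*c₁^5*a₂*b₂*c₂ + (47604035/80706528)*a₁*b₁^4*b₂^2*c₂ + (-36330043/80706528)*b₁^5*b₂^2*c₂ + (-14205653003/22866849600)*a₁*b₁^3*c₁*b₂^2*c₂ + (54639541003/34300274400)*b₁^4*c₁*b₂^2*c₂ + (-4344158648563/274402195200)*a₁*b₁^2*c₁^2*b₂^2*c₂ + (-513065883901/91467398400)*b₁^3*c₁^2*b₂^2*c₂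 + (1090676338897/137201097600)*a₁*b₁*c₁^3*b₂^2*c₂ + (195665058599/30489132800)*b₁^2*c₁^3*b₂^2*c₂ + (21366383711/30489132800)*a₁*c₁^4*b₂^2*c₂ + (6497864431/7840062720)*b₁*c₁^4*b₂^2*c₂ + (-1083286007183/274402195200)*c₁^5*b₂^2*c₂ + (151009/1120924)*b₁^4*c₁*a₂*c₂^2 + (-203727325103/34300274400)*a₁*b₁^2*c₁^2*a₂*c₂^2 + (-28443778529/4900039200)*b₁^3*c₁^2*a₂*c₂^2 + (-19832607489/1905570800)*a₁*b₁*c₁^3*a₂*c₂^2 + (-28121904827/8575068600)*b₁^2*c₁^3*a₂*c₂^2 + (5774588693/6860054880)*a₁*c₁^4*a₂*c₂^2 + (-87427190819/17150137200)*b₁*c₁^4*a₂*c₂^2 + (5774588693/3430027440)*c₁^5*a₂*c₂^2 + (-33466211/80706528)*a₁*b₁^4*b₂*c₂^2 + (4746431/11529504)*b₁^5*b₂*c₂^2 + (-3719661959/531787200)*a₁*b₁^3*c₁*b₂*c₂^2 + (-33173678051/8575068600)*b₁^4*c₁*b₂*c₂^2 + (-225416830829/45733699200)*a₁*b₁^2*c₁^2*b₂*c₂^2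 + (-14595251141/1793478400)*b₁^3*c₁^2*b₂*c₂^2 + (2196883679/13720109760)*a₁*b₁*c₁^3*b₂*c₂^2 + (-375647396447/39200313600)*b₁^2*c₁^3*b₂*c₂^2 + (281359726583/137201097600)*a₁*c₁^4*b₂*c₂^2 + (-2536484429299/274402195200)*b₁*c₁^4*b₂*c₂^2 + (-152525759411/18293479680)*c₁^5*b₂*c₂^2 + (-5774588693/6860054880)*a₁*b₁^3*c₁*c₂^3 + (-6005632463/3430027440)*b₁^4*c₁*c₂^3 + (88582409669/34300274400)*a₁*b₁^2*c₁^2*c₂^3 + (9508695013/11433424800)*b₁^3*c₁^2*c₂^3 + (90892847369/34300274400)*a₁*b₁*c₁^3*c₂^3 + (-4174257413/4900039200)*b₁^2*c₁^3*c₂^3 + (88582409669/34300274400)*b₁*c₁^4*c₂^3 + (-5774588693/6860054880)*c₁^5*c₂^3) * e2 + ((-993103/606816)*b₁^3*a₂*b₂^2 + (-1038575037/100293200)*b₁^2*c₁*a₂*b₂^2 + (-315365078851/68600548800)*a₁*c₁^2*a₂*b₂^2 + (-19911953321/1063574400)*b₁*c₁^2*a₂*b₂^2 + (-12878644327/1429178100)*c₁^3*a₂*b₂^2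 + (-6827729/26902176)*a₁*b₁^2*b₂^3 + (1007157/1281056)*b₁^3*b₂^3 + (-5266236379/1905570800)*b₁^2*c₁*b₂^3 + (-12456348235/1372010976)*a₁*c₁^2*b₂^3 + (-68645925647/9146739840)*b₁*c₁^2*b₂^3 + (-1304626017/89673920)*c₁^3*b₂^3 + (-269231/707952)*b₁^3*a₂*b₂*c₂ + (106033499737/22866849600)*a₁*b₁*c₁*a₂*b₂*c₂ + (-24130687057/3920031360)*b₁^2*c₁*a₂*b₂*c₂ + (-1160235357671/137201097600)*a₁*c₁^2*a₂*b₂*c₂ + (-20516594229/7622283200)*b₁*c₁^2*a₂*b₂*c₂ + (83305365089/137201097600)*c₁^3*a₂*b₂*c₂ + (-13543940941/1633346400)*a₁*b₁^2*b₂^2*c₂ + (-180944282093/34300274400)*b₁^3*b₂^2*c₂ + (-6571818551/2286684960)*a₁*b₁*c₁*b₂^2*c₂ + (-2972374972339/137201097600)*b₁^2*c₁*b₂^2*c₂ + (-475112215709/34300274400)*a₁*c₁^2*b₂^2*c₂ + (-479459273387/22866849600)*b₁*c₁^2*b₂^2*c₂ + (-1967545372379/137201097600)*c₁^3*b₂^2*c₂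 + (-707383351/214376715)*a₁*b₁^2*a₂*c₂^2 + (-791934989/490003920)*b₁^3*a₂*c₂^2 + (-5475038752/1071883575)*a₁*b₁*c₁*a₂*c₂^2 + (151009/2241848)*b₁^2*c₁*a₂*c₂^2 + (-5774588693/3430027440)*a₁*c₁^2*a₂*c₂^2 + (-5312501153/6860054880)*b₁*c₁^2*a₂*c₂^2 + (-38250853457/2450019600)*a₁*b₁^2*b₂*c₂^2 + (-70958326181/8575068600)*b₁^3*b₂*c₂^2 + (10536888629/5488043904)*a₁*b₁*c₁*b₂*c₂^2 + (-1071578030273/68600548800)*b₁^2*c₁*b₂*c₂^2 + (-216627063643/22866849600)*a₁*c₁^2*b₂*c₂^2 + (-38727529649/6860054880)*b₁*c₁^2*b₂*c₂^2 + (-712539483353/68600548800)*c₁^3*b₂*c₂^2 + (-2945055289/857506860)*a₁*b₁^2*c₂^3 + (-6005632463/3430027440)*b₁^3*c₂^3 + (2796556027/816673200)*a₁*b₁*c₁*c₂^3 + (-5928617873/2286684960)*b₁^2*c₁*c₂^3 + (-5774588693/3430027440)*a₁*c₁^2*c₂^3 + (-6005632463/3430027440)*b₁*c₁^2*c₂^3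 + (-5774588693/3430027440)*c₁^3*c₂^3) * e3 + ((95062303429/27440219520)*c₁^3*a₂^2*b₂ + (-527083137359/274402195200)*a₁*c₁^2*a₂*b₂^2 + (-351988236587/91467398400)*b₁*c₁^2*a₂*b₂^2 + (-29353418855/5488043904)*b₁*c₁^2*b₂^3 + (47904052223/54880439040)*c₁^3*b₂^3 + (177482717371/137201097600)*a₁*b₁*c₁*a₂*b₂*c₂ + (90687483163/54880439040)*b₁^2*c₁*a₂*b₂*c₂ + (-30257967907/45733699200)*a₁*c₁^2*a₂*b₂*c₂ + (-38934558479/13720109760)*b₁*c₁^2*a₂*b₂*c₂ + (76050018907/274402195200)*c₁^3*a₂*b₂*c₂ + (-152102751893/68600548800)*b₁^3*b₂^2*c₂ + (111832734607/34300274400)*a₁*b₁*c₁*b₂^2*c₂ + (-3178762627/1793478400)*b₁^2*c₁*b₂^2*c₂ + (91214353/36105552)*a₁*c₁^2*b₂^2*c₂ + (-12778155149/2407036800)*b₁*c₁^2*b₂^2*c₂ + (429571105/215217408)*c₁^3*b₂^2*c₂ + (-5774588693/6860054880)*a₁^3*a₂*c₂^2 + (5774588693/6860054880)*b₁^2*c₁*a₂*c₂^2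 + (-19586723641/4900039200)*b₁^3*b₂*c₂^2 + (1914301911/1793478400)*a₁*b₁*c₁*b₂*c₂^2 + (-8423456917/6533385600)*b₁^2*c₁*b₂*c₂^2 + (5679063391/13066771200)*a₁*c₁^2*b₂*c₂^2 + (-1707897472693/274402195200)*b₁*c₁^2*b₂*c₂^2 + (465347864041/274402195200)*c₁^3*b₂*c₂^2 + (-5774588693/6860054880)*b₁^3*c₂^3 + (5774588693/6860054880)*a₁*c₁^2*c₂^3) * c01 + ((19037671/26902176)*b₁^3*a₂^2*b₂ + (-131239822897/68600548800)*b₁*c₁^2*a₂^2*b₂ + (-13213681/26902176)*a₁^2*b₁*a₂*b₂^2 + (-10737214373/4035326400)*a₁^2*c₁*a₂*b₂^2 + (49316957203/54880439040)*a₁*c₁^2*a₂*b₂^2 + (12838966517/8575068600)*b₁^2*c₁*b₂^3 + (46015099/80706528)*a₁*b₁^2*b₂*c₂^2 + (1629511/10088316)*b₁^3*b₂*c₂^2) * c02 + ((-19744312667/13720109760)*a₁^2*c₁*a₂^2*b₂ + (49690285/80706528)*a₁^2*b₁*a₂*b₂^2 + (-1012826333/622227200)*a₁*c₁^2*a₂*b₂^2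 + (-255169743379/274402195200)*a₁*c₁^2*b₂^3) * c12 + ((30194895579/15244566400)*b₁*c₁^2*a₂^2*b₂ + (-3861623/40353264)*a₁*b₁^2*a₂*b₂^2 + (-49870471009/68600548800)*a₁*c₁^2*a₂*b₂^2 + (1509566143/461180160)*c₁^3*a₂*b₂^2 + (-21370793411/34300274400)*b₁^2*c₁*b₂^3 + (-528517946261/274402195200)*a₁*c₁^2*b₂^3 + (-2775370049/1429178100)*b₁*c₁^2*b₂^3 + (238216534319/137201097600)*c₁^3*b₂^3 + (7116848497/17150137200)*a₁*c₁^2*a₂*b₂*c₂ + (10938125897/54880439040)*b₁*c₁^2*a₂*b₂*c₂ + (-420236505079/274402195200)*c₁^3*a₂*b₂*c₂ + (-3349105/10088316)*b₁^3*b₂^2*c₂ + (-469953977/214376715)*b₁^2*c₁*b₂^2*c₂ + (-271384656713/274402195200)*a₁*c₁^2*b₂^2*c₂ + (-5141874751/13066771200)*b₁*c₁^2*b₂^2*c₂ + (98427650579/39200313600)*c₁^3*b₂^2*c₂ + (5037163/20176632)*a₁*b₁^2*b₂*c₂^2 + (3922885/40353264)*b₁^3*b₂*c₂^2 + (-51367067399/68600548800)*a₁*b₁*c₁*b₂*c₂^2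 + (-37020673691/13066771200)*a₁*c₁^2*b₂*c₂^2 + (-27198268297/137201097600)*b₁*c₁^2*b₂*c₂^2 + (-426742357661/274402195200)*c₁^3*b₂*c₂^2) * d01 + ((16170194851/13720109760)*b₁^2*c₁*a₂^2*b₂ + (-19584828587/10976087808)*c₁^3*a₂^2*b₂ + (-93092144497/137201097600)*a₁*c₁^2*a₂*b₂^2 + (123661992121/91467398400)*b₁*c₁^2*a₂*b₂^2 + (2670467707/13720109760)*b₁^2*c₁*b₂^3 + (23691521299/39200313600)*a₁*c₁^2*b₂^3 + (119117568863/274402195200)*b₁*c₁^2*b₂^3 + (-134571077317/91467398400)*c₁^3*b₂^3 + (151009/4483696)*a₁^2*b₁*a₂^2*c₂ + (148638734299/68600548800)*a₁*b₁*c₁*a₂^2*c₂ + (-32807/480396)*a₁^2*b₁*b₂*c₂^2) * d02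
    exact pow_eq_zero_iff (by norm_num : (5:ℕ) ≠ 0) |>.mp h5
  · have h5 : (a₁ * c₂)^5 = 0 := by
      linear_combination ((-10124980127137/1452313971360)*a₁^2*c₁*a₂^4*b₂ + (10124980127137/1452313971360)*b₁^2*c₁*a₂^4*b₂ + (-10124980127137/1452313971360)*a₁*c₁^2*a₂^4*b₂ + (23375827636799/7261569856800)*b₁*c₁^2*a₂^4*b₂ + (-814581275239/290462794272)*c₁^3*a₂^4*b₂ + (13033312760/9076962321)*a₁^2*b₁*a₂^3*b₂^2 + (9319453027/9076962321)*a₁*b₁^2*a₂^3*b₂^2 + (420413594/9076962321)*b₁^3*a₂^3*b₂^2 + (-51248162145601/7261569856800)*a₁*b₁*c₁*a₂^3*b₂^2 + (-2363053007369/1452313971360)*b₁^2*c₁*a₂^3*b₂^2 + (121209619138457/29046279427200)*a₁*c₁^2*a₂^3*b₂^2 + (-92379491090611/4149468489600)*b₁*c₁^2*a₂^3*b₂^2 + (-36229253080127/4149468489600)*c₁^3*a₂^3*b₂^2 + (381490782/1008551369)*a₁^2*b₁*a₂^2*b₂^3 + (-13909194091/9076962321)*b₁^3*a₂^2*b₂^3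 + (-61674812353601/3630784928400)*a₁^2*c₁*a₂^2*b₂^3 + (10674326853217/1452313971360)*a₁*b₁*c₁*a₂^2*b₂^3 + (1064553049849/605130821400)*b₁^2*c₁*a₂^2*b₂^3 + (-796275365605171/29046279427200)*a₁*c₁^2*a₂^2*b₂^3 + (-288874518386077/9682093142400)*b₁*c₁^2*a₂^2*b₂^3 + (-4578555491147/337747435200)*c₁^3*a₂^2*b₂^3 + (-3133749737/2017102738)*a₁*b₁^2*a₂*b₂^4 + (2107145897/1296708903)*b₁^3*a₂*b₂^4 + (66888137457601/3630784928400)*a₁*b₁*c₁*a₂*b₂^4 + (-35652838976779/3630784928400)*b₁^2*c₁*a₂*b₂^4 + (-17622035820997/592781212800)*a₁*c₁^2*a₂*b₂^4 + (-117100054985701/2904627942720)*b₁*c₁^2*a₂*b₂^4 + (188987664564887/29046279427200)*c₁^3*a₂*b₂^4 + (-86838574537/41025818400)*b₁^2*c₁*b₂^5 + (-240530581451969/29046279427200)*a₁*c₁^2*b₂^5 + (-12586591165903/1936418628480)*b₁*c₁^2*b₂^5 + (1288737983521/387283725696)*c₁^3*b₂^5 + (-13109/10797)*a₁^3*a₂^4*c₂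 + (26218/10797)*a₁^2*b₁*a₂^4*c₂ + (-985333935/2017102738)*a₁*b₁^2*a₂^4*c₂ + (-11738190911/6051308214)*b₁^3*a₂^4*c₂ + (13109/10797)*a₁^2*c₁*a₂^4*c₂ + (-26218/10797)*a₁*b₁*c₁*a₂^4*c₂ + (466843050721/61538727600)*b₁^2*c₁*a₂^4*c₂ + (-11738190911/6051308214)*b₁*c₁^2*a₂^4*c₂ + (-13109/10797)*c₁^3*a₂^4*c₂ + (33779479985/12102616428)*a₁^2*b₁*a₂^3*b₂*c₂ + (-8332430293/4034205476)*a₁*b₁^2*a₂^3*b₂*c₂ + (-4391094553/3025654107)*b₁^3*a₂^3*b₂*c₂ + (-6747263618057/1210261642800)*a₁*b₁*c₁*a₂^3*b₂*c₂ + (230268445669967/14523139713600)*b₁^2*c₁*a₂^3*b₂*c₂ + (4603274463269/207473424480)*a₁*c₁^2*a₂^3*b₂*c₂ + (-59671134915941/7261569856800)*b₁*c₁^2*a₂^3*b₂*c₂ + (238093020647233/14523139713600)*c₁^3*a₂^3*b₂*c₂ + (13109/10797)*a₁^3*a₂^2*b₂^2*c₂ + (-10303098163/12102616428)*a₁^2*b₁*a₂^2*b₂^2*c₂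 + (290315051/5186835612)*a₁*b₁^2*a₂^2*b₂^2*c₂ + (-3690219796339/518683561200)*b₁^3*a₂^2*b₂^2*c₂ + (-13109/10797)*a₁^2*c₁*a₂^2*b₂^2*c₂ + (-43680583165679/2420523285600)*a₁*b₁*c₁*a₂^2*b₂^2*c₂ + (200682752849/238084257600)*b₁^2*c₁*a₂^2*b₂^2*c₂ + (20671189164901/2420523285600)*a₁*c₁^2*a₂^2*b₂^2*c₂ + (-668589576317611/14523139713600)*b₁*c₁^2*a₂^2*b₂^2*c₂ + (-21788924997865/1161851177088)*c₁^3*a₂^2*b₂^2*c₂ + (-8611035856499/907696232100)*a₁*b₁^2*a₂*b₂^3*c₂ + (3807306263/2593417806)*b₁^3*a₂*b₂^3*c₂ + (-54819434045911/3630784928400)*a₁*b₁*c₁*a₂*b₂^3*c₂ + (-128184801431863/7261569856800)*b₁^2*c₁*a₂*b₂^3*c₂ + (-744629764609091/29046279427200)*a₁*c₁^2*a₂*b₂^3*c₂ + (-766052657514037/29046279427200)*b₁*c₁^2*a₂*b₂^3*c₂ + (31776539420617/2904627942720)*c₁^3*a₂*b₂^3*c₂ + (13481310277/9076962321)*b₁^3*b₂^4*c₂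 + (-2253055795857/201710273800)*b₁^2*c₁*b₂^4*c₂ + (-232267006950661/29046279427200)*a₁*c₁^2*b₂^4*c₂ + (-294918941239/13785609600)*b₁*c₁^2*b₂^4*c₂ + (-38717425115423/29046279427200)*c₁^3*b₂^4*c₂ + (210337832759/181539246420)*a₁^3*a₂^3*c₂^2 + (-103880878169/181539246420)*a₁^2*b₁*a₂^3*c₂^2 + (-497904386429/181539246420)*a₁*b₁^2*a₂^3*c₂^2 + (-3397478905/2017102738)*b₁^3*a₂^3*c₂^2 + (-100131387389/363078492840)*a₁^2*c₁*a₂^3*c₂^2 + (-3218131065/1008551369)*a₁*b₁*c₁*a₂^3*c₂^2 + (2080517962139/172894520400)*b₁^2*c₁*a₂^3*c₂^2 + (-100131387389/363078492840)*a₁*c₁^2*a₂^3*c₂^2 + (-1312673237369/86447260200)*b₁*c₁^2*a₂^3*c₂^2 + (100131387389/181539246420)*c₁^3*a₂^3*c₂^2 + (-438249705059/181539246420)*a₁^3*a₂^2*b₂*c₂^2 + (-42716840987/25934178060)*a₁^2*b₁*a₂^2*b₂*c₂^2 + (-27728680387/9076962321)*a₁*b₁^2*a₂^2*b₂*c₂^2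 + (-31295657859007/1815392464200)*b₁^3*a₂^2*b₂*c₂^2 + (7420033585777/1452313971360)*a₁^2*c₁*a₂^2*b₂*c₂^2 + (102339304279/17776180800)*a₁*b₁*c₁*a₂^2*b₂*c₂^2 + (216627973015/32273643808)*b₁^2*c₁*a₂^2*b₂*c₂^2 + (206090901722357/7261569856800)*a₁*c₁^2*a₂^2*b₂*c₂^2 + (-492163157431709/14523139713600)*b₁*c₁^2*a₂^2*b₂*c₂^2 + (-1612172492687/207473424480)*c₁^3*a₂^2*b₂*c₂^2 + (-39347453891/36307849284)*a₁^2*b₁*a₂*b₂^2*c₂^2 + (-6953547876021/201710273800)*a₁*b₁^2*a₂*b₂^2*c₂^2 + (4268440781/1152630136)*b₁^3*a₂*b₂^2*c₂^2 + (22695232638727/1210261642800)*a₁^2*c₁*a₂*b₂^2*c₂^2 + (-1013113941817/119042128800)*a₁*b₁*c₁*a₂*b₂^2*c₂^2 + (-15654023489719/1210261642800)*b₁^2*c₁*a₂*b₂^2*c₂^2 + (-93073391994721/2074734244800)*a₁*c₁^2*a₂*b₂^2*c₂^2 + (-1310047915072261/29046279427200)*b₁*c₁^2*a₂*b₂^2*c₂^2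 + (-25367718784823/1037367122400)*c₁^3*a₂*b₂^2*c₂^2 + (-907757579/1728945204)*a₁^2*b₁*b₂^3*c₂^2 + (35752368499/36307849284)*a₁*b₁^2*b₂^3*c₂^2 + (28576639703/36307849284)*b₁^3*b₂^3*c₂^2 + (356322783419/191093943600)*a₁*b₁*c₁*b₂^3*c₂^2 + (-25604414618017/726156985680)*b₁^2*c₁*b₂^3*c₂^2 + (-118077652830379/7261569856800)*a₁*c₁^2*b₂^3*c₂^2 + (-294479968409059/29046279427200)*b₁*c₁^2*b₂^3*c₂^2 + (-27901449404833/2074734244800)*c₁^3*b₂^3*c₂^2 + (-13109/21594)*a₁*b₁^2*a₂^2*c₂^3 + (-601331983619/181539246420)*b₁^3*a₂^2*c₂^3 + (27110/10797)*a₁^2*c₁*a₂^2*c₂^3 + (-3996052321/2017102738)*a₁*b₁*c₁*a₂^2*c₂^3 + (3149832869961/403420547600)*b₁^2*c₁*a₂^2*c₂^3 + (-529565778719/181539246420)*a₁*c₁^2*a₂^2*c₂^3 + (-24582221822339/3630784928400)*b₁*c₁^2*a₂^2*c₂^3 + (288497060969/363078492840)*c₁^3*a₂^2*c₂^3 + (320544278129/90769623210)*a₁^2*b₁*a₂*b₂*c₂^3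 + (-1932162667237/181539246420)*a₁*b₁^2*a₂*b₂*c₂^3 + (388319032721/181539246420)*b₁^3*a₂*b₂*c₂^3 + (51015772341077/7261569856800)*a₁*b₁*c₁*a₂*b₂*c₂^3 + (-4493087804227/1452313971360)*b₁^2*c₁*a₂*b₂*c₂^3 + (34530744309553/4149468489600)*a₁*c₁^2*a₂*b₂*c₂^3 + (-684618905956981/29046279427200)*b₁*c₁^2*a₂*b₂*c₂^3 + (-40354823790091/2074734244800)*c₁^3*a₂*b₂*c₂^3 + (-907757579/864472602)*a₁^2*b₁*b₂^2*c₂^3 + (11617636997/9076962321)*a₁*b₁^2*b₂^2*c₂^3 + (35605312031/36307849284)*b₁^3*b₂^2*c₂^3 + (20114169296261/7261569856800)*a₁*b₁*c₁*b₂^2*c₂^3 + (-11872371034343/605130821400)*b₁^2*c₁*b₂^2*c₂^3 + (-31638183914353/4149468489600)*a₁*c₁^2*b₂^2*c₂^3 + (5222058368801/5809255885440)*b₁*c₁^2*b₂^2*c₂^3 + (-133433625597697/4841046571200)*c₁^3*b₂^2*c₂^3 + (13555/10797)*a₁^3*a₂*c₂^4 + (-13555/21594)*a₁^2*b₁*a₂*c₂^4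 + (-13555/21594)*a₁*b₁^2*a₂*c₂^4 + (13555/10797)*b₁^3*a₂*c₂^4 + (-776368022729/363078492840)*a₁^2*c₁*a₂*c₂^4 + (-320544278129/363078492840)*a₁*b₁*c₁*a₂*c₂^4 + (-317652163/439562340)*b₁^2*c₁*a₂*c₂^4 + (-13555/10797)*a₁*c₁^2*a₂*c₂^4 + (-790406722669/172894520400)*b₁*c₁^2*a₂*c₂^4 + (335751119251/363078492840)*c₁^3*a₂*c₂^4 + (-25266847877/18153924642)*a₁*b₁^2*b₂*c₂^4 + (1140018578/432236301)*b₁^3*b₂*c₂^4 + (907757579/864472602)*a₁*b₁*c₁*b₂*c₂^4 + (-60132196132439/1815392464200)*b₁^2*c₁*b₂*c₂^4 + (-69880930600589/9682093142400)*b₁*c₁^2*b₂*c₂^4 + (-135718610030621/5809255885440)*c₁^3*b₂*c₂^4 + a₁^3*c₂^5 - a₁^2*b₁*c₂^5 + b₁^3*c₂^5 - a₁^2*c₁*c₂^5 + a₁*b₁*c₁*c₂^5 + (-503548655579/90769623210)*b₁^2*c₁*c₂^5 + (1445538761069/172894520400)*b₁*c₁^2*c₂^5 + (204317175631/363078492840)*c₁^3*c₂^5)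 * e1 + ((4776535895/3025654107)*a₁*b₁^4*a₂^2*b₂ + (4776535895/3025654107)*b₁^5*a₂^2*b₂ + (-925246891799/290462794272)*a₁*b₁^3*c₁*a₂^2*b₂ + (-5539505667937/1452313971360)*b₁^4*c₁*a₂^2*b₂ + (1572501310253/726156985680)*a₁*b₁^2*c₁^2*a₂^2*b₂ + (-56386930583863/3630784928400)*b₁^3*c₁^2*a₂^2*b₂ + (-19639075615651/4841046571200)*a₁*b₁*c₁^3*a₂^2*b₂ + (-2058992076131/403420547600)*b₁^2*c₁^3*a₂^2*b₂ + (814581275239/580925588544)*a₁*c₁^4*a₂^2*b₂ + (5504368649557/691578081600)*b₁*c₁^4*a₂^2*b₂ + (7794940014745/580925588544)*c₁^5*a₂^2*b₂ + (-1296294925/18153924642)*a₁*b₁^4*a₂*b₂^2 + (-2107145897/1296708903)*b₁^5*a₂*b₂^2 + (-53070086389807/7261569856800)*a₁*b₁^3*c₁*a₂*b₂^2 + (584136708031/363078492840)*b₁^4*c₁*a₂*b₂^2 + (-74414348782331/3227364380800)*a₁*b₁^2*c₁^2*a₂*b₂^2 + (654838009847719/29046279427200)*b₁^3*c₁^2*a₂*b₂^2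 + (138706462608851/5809255885440)*a₁*b₁*c₁^3*a₂*b₂^2 + (22936405796539/1383156163200)*b₁^2*c₁^3*a₂*b₂^2 + (71871651947453/2904627942720)*a₁*c₁^4*a₂*b₂^2 + (96491485332181/4841046571200)*b₁*c₁^4*a₂*b₂^2 + (9001103715157/14523139713600)*c₁^5*a₂*b₂^2 + (-5616590118443/7261569856800)*a₁*b₁^3*c₁*b₂^3 + (101041989913/201710273800)*b₁^4*c₁*b₂^3 + (21118491099395/1161851177088)*a₁*b₁^2*c₁^2*b₂^3 + (15156532520107/14523139713600)*b₁^3*c₁^2*b₂^3 + (630224044561781/29046279427200)*a₁*b₁*c₁^3*b₂^3 + (61490782298599/4149468489600)*b₁^2*c₁^3*b₂^3 + (217634648291/337747435200)*a₁*c₁^4*b₂^3 + (-670905177019751/29046279427200)*b₁*c₁^4*b₂^3 + (-15675764175679/2904627942720)*c₁^5*b₂^3 + (26218/10797)*a₁*b₁^4*a₂^2*c₂ + (11738190911/6051308214)*b₁^5*a₂^2*c₂ + (-9910708733339/3630784928400)*a₁*b₁^3*c₁*a₂^2*c₂ + (-20500825445939/3630784928400)*b₁^4*c₁*a₂^2*c₂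 + (-9910708733339/3630784928400)*a₁*b₁^2*c₁^2*a₂^2*c₂ + (-13457910899339/3630784928400)*b₁^3*c₁^2*a₂^2*c₂ + (-9910708733339/3630784928400)*a₁*b₁*c₁^3*a₂^2*c₂ + (-16092567631139/3630784928400)*b₁^2*c₁^3*a₂^2*c₂ + (13109/10797)*a₁*c₁^4*a₂^2*c₂ + (6361762423/2017102738)*b₁*c₁^4*a₂^2*c₂ + (13109/10797)*c₁^5*a₂^2*c₂ + (14132829439/24205232856)*a₁*b₁^4*a₂*b₂*c₂ + (-12509073595/6051308214)*b₁^5*a₂*b₂*c₂ + (-171268144301063/7261569856800)*a₁*b₁^3*c₁*a₂*b₂*c₂ + (-58902925231813/7261569856800)*b₁^4*c₁*a₂*b₂*c₂ + (-116950751932173/3227364380800)*a₁*b₁^2*c₁^2*a₂*b₂*c₂ + (-494710631464183/29046279427200)*b₁^3*c₁^2*a₂*b₂*c₂ + (-151936551754187/4841046571200)*a₁*b₁*c₁^3*a₂*b₂*c₂ + (-300837895747091/14523139713600)*b₁^2*c₁^3*a₂*b₂*c₂ + (-150752865226001/9682093142400)*a₁*c₁^4*a₂*b₂*c₂ + (-74054867899997/9682093142400)*b₁*c₁^4*a₂*b₂*c₂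 + (-225299776137529/7261569856800)*c₁^5*a₂*b₂*c₂ + (-7027419575/18153924642)*a₁*b₁^4*b₂^2*c₂ + (29900342449/18153924642)*b₁^5*b₂^2*c₂ + (529919146457/127395962400)*a₁*b₁^3*c₁*b₂^2*c₂ + (-3686132330561/1210261642800)*b₁^4*c₁*b₂^2*c₂ + (6883090536533/169861283200)*a₁*b₁^2*c₁^2*b₂^2*c₂ + (582496925412583/29046279427200)*b₁^3*c₁^2*b₂^2*c₂ + (-136253814743/764375774400)*a₁*b₁*c₁^3*b₂^2*c₂ + (-6247280671539/3227364380800)*b₁^2*c₁^3*b₂^2*c₂ + (-38490389213113/9682093142400)*a₁*c₁^4*b₂^2*c₂ + (7067671607009/829893697920)*b₁*c₁^4*b₂^2*c₂ + (-1983221787893/3227364380800)*c₁^5*b₂^2*c₂ + (8039/21594)*a₁*b₁^4*a₂*c₂^2 + (-2758/10797)*b₁^5*a₂*c₂^2 + (-2747/3599)*a₁*b₁^3*c₁*a₂*c₂^2 + (-14839382171/6051308214)*b₁^4*c₁*a₂*c₂^2 + (4694554806701/453848116050)*a₁*b₁^2*c₁^2*a₂*c₂^2 + (313395106309/32417722575)*b₁^3*c₁^2*a₂*c₂^2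 + (419308462257/21232660400)*a₁*b₁*c₁^3*a₂*c₂^2 + (12765669323969/1815392464200)*b₁^2*c₁^3*a₂*c₂^2 + (-540957168869/363078492840)*a₁*c₁^4*a₂*c₂^2 + (20839237930159/1815392464200)*b₁*c₁^4*a₂*c₂^2 + (-320544278129/181539246420)*c₁^5*a₂*c₂^2 + (-57810897853/72615698568)*a₁*b₁^4*b₂*c₂^2 + (-39863762/21978117)*b₁^5*b₂*c₂^2 + (42224760133/2862266400)*a₁*b₁^3*c₁*b₂*c₂^2 + (19828188220697/1815392464200)*b₁^4*c₁*b₂*c₂^2 + (67504852509469/4841046571200)*a₁*b₁^2*c₁^2*b₂*c₂^2 + (700873828165153/29046279427200)*b₁^3*c₁^2*b₂*c₂^2 + (-3266500563139/1452313971360)*a₁*b₁*c₁^3*b₂*c₂^2 + (14899290692563/461052054400)*b₁^2*c₁^3*b₂*c₂^2 + (-97491857572213/14523139713600)*a₁*c₁^4*b₂*c₂^2 + (622331208115639/29046279427200)*b₁*c₁^4*b₂*c₂^2 + (89522699732353/5809255885440)*c₁^5*b₂*c₂^2 - a₁*b₁^4*c₂^3 - b₁^5*c₂^3 + (41602340729/363078492840)*a₁*b₁^3*c₁*c₂^3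 + (348459936149/181539246420)*b₁^4*c₁*c₂^3 + (-24628455923959/3630784928400)*a₁*b₁^2*c₁^2*c₂^3 + (-6652850851993/1210261642800)*b₁^3*c₁^2*c₂^3 + (-31755103493359/3630784928400)*a₁*b₁*c₁^3*c₂^3 + (-1452054583457/518683561200)*b₁^2*c₁^3*c₂^3 + (-8984/10797)*a₁*c₁^4*c₂^3 + (-32399485738759/3630784928400)*b₁*c₁^4*c₂^3 + (-480753847891/363078492840)*c₁^5*c₂^3) * e2 + ((78765241/136495674)*b₁^3*a₂*b₂^2 + (102410632751569/3630784928400)*b₁^2*c₁*a₂*b₂^2 + (1792438439819/382187887200)*a₁*c₁^2*a₂*b₂^2 + (6302729104781/112582478400)*b₁*c₁^2*a₂*b₂^2 + (65889701774089/1815392464200)*c₁^3*a₂*b₂^2 + (-2215022331/2017102738)*a₁*b₁^2*b₂^3 + (-2707760143/864472602)*b₁^3*b₂^3 + (1613083277469/201710273800)*b₁^2*c₁*b₂^3 + (3587852481781/145231397136)*a₁*c₁^2*b₂^3 + (22661838845687/968209314240)*b₁*c₁^2*b₂^3 + (59875291339121/1452313971360)*c₁^3*b₂^3 + (-1368344699/1273959624)*b₁^3*a₂*b₂*c₂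 + (-6494674960657/2420523285600)*a₁*b₁*c₁*a₂*b₂*c₂ + (8379672697937/414946848960)*b₁^2*c₁*a₂*b₂*c₂ + (255309957925231/14523139713600)*a₁*c₁^2*a₂*b₂*c₂ + (138848506683871/7261569856800)*b₁*c₁^2*a₂*b₂*c₂ + (23478899289971/14523139713600)*c₁^3*a₂*b₂*c₂ + (1548223026157/129670890300)*a₁*b₁^2*b₂^2*c₂ + (19058399733223/3630784928400)*b₁^3*b₂^2*c₂ + (803637802907/30256541070)*a₁*b₁*c₁*b₂^2*c₂ + (255481045449193/4841046571200)*b₁^2*c₁*b₂^2*c₂ + (23767911367681/907696232100)*a₁*c₁^2*b₂^2*c₂ + (443586123098021/7261569856800)*b₁*c₁^2*b₂^2*c₂ + (502351700488319/14523139713600)*c₁^3*b₂^2*c₂ + (11941557448/2388674295)*a₁*b₁^2*a₂*c₂^2 + (42181199447/25934178060)*b₁^3*a₂*c₂^2 + (33117246816229/3630784928400)*a₁*b₁*c₁*a₂*c₂^2 + (-80951278/49600887)*b₁^2*c₁*a₂*c₂^2 + (586438660169/181539246420)*a₁*c₁^2*a₂*c₂^2 + (96708872969/363078492840)*b₁*c₁^2*a₂*c₂^2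 + (23345/21594)*c₁^3*a₂*c₂^2 + (8678941429177/259341780600)*a₁*b₁^2*b₂*c₂^2 + (14200229007241/907696232100)*b₁^3*b₂*c₂^2 + (338873450917/193641862848)*a₁*b₁*c₁*b₂*c₂^2 + (260372535050153/7261569856800)*b₁^2*c₁*b₂*c₂^2 + (130495543987619/7261569856800)*a₁*c₁^2*b₂*c₂^2 + (769745369357/60513082140)*b₁*c₁^2*b₂*c₂^2 + (137940496370683/7261569856800)*c₁^3*b₂*c₂^2 + (594318278789/90769623210)*a₁*b₁^2*c₂^3 + (384668583659/181539246420)*b₁^3*c₂^3 + (-1272644240669/172894520400)*a₁*b₁*c₁*c₂^3 + (337069798169/121026164280)*b₁^2*c₁*c₂^3 + (285310834499/181539246420)*a₁*c₁^2*c₂^3 + (198101993099/181539246420)*b₁*c₁^2*c₂^3 + (254827306319/181539246420)*c₁^3*c₂^3) * e3 + ((-24322866630469/2904627942720)*c₁^3*a₂^2*b₂ + (1433032448107/509583849600)*a₁*c₁^2*a₂*b₂^2 + (244414804552021/29046279427200)*b₁*c₁^2*a₂*b₂^2 + (8067869101123/580925588544)*b₁*c₁^2*b₂^3 + (-12020458598543/5809255885440)*c₁^3*b₂^3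 + (-32761259182481/14523139713600)*a₁*b₁*c₁*a₂*b₂*c₂ + (3517167093/645472876160)*b₁^2*c₁*a₂*b₂*c₂ + (1919663662349/764375774400)*a₁*c₁^2*a₂*b₂*c₂ + (490008190751/60513082140)*b₁*c₁^2*a₂*b₂*c₂ + (42601083442591/9682093142400)*c₁^3*a₂*b₂*c₂ + (20482165132573/7261569856800)*b₁^3*b₂^2*c₂ + (-41617102302929/7261569856800)*a₁*b₁*c₁*b₂^2*c₂ + (298698776340091/29046279427200)*b₁^2*c₁*b₂^2*c₂ + (-838211714771/290462794272)*a₁*c₁^2*b₂^2*c₂ + (216068656639523/14523139713600)*b₁*c₁^2*b₂^2*c₂ + (-2877034550003/1161851177088)*c₁^3*b₂^2*c₂ + (320544278129/363078492840)*a₁^3*a₂*c₂^2 + (2553/7198)*a₁*b₁*c₁*a₂*c₂^2 + (-408548021369/363078492840)*b₁^2*c₁*a₂*c₂^2 + (1094825225369/129670890300)*b₁^3*b₂*c₂^2 + (-33984847717063/29046279427200)*a₁*b₁*c₁*b₂*c₂^2 + (1247499661679/230526027200)*b₁^2*c₁*b₂*c₂^2 + (19213705774547/4149468489600)*a₁*c₁^2*b₂*c₂^2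 + (526178927682173/29046279427200)*b₁*c₁^2*b₂*c₂^2 + (-9979533089101/29046279427200)*c₁^3*b₂*c₂^2 + (477098128589/363078492840)*b₁^3*c₂^3 + (1996/10797)*b₁^2*c₁*c₂^3 + (-411860351789/363078492840)*a₁*c₁^2*c₂^3) * c01 + ((-4776535895/3025654107)*b₁^3*a₂^2*b₂ + (19386566447621/3630784928400)*b₁*c₁^2*a₂^2*b₂ + (-190745391/1008551369)*a₁^2*b₁*a₂*b₂^2 + (61674812353601/7261569856800)*a₁^2*c₁*a₂*b₂^2 + (-6365380822463/5809255885440)*a₁*c₁^2*a₂*b₂^2 + (-7240274550773/3630784928400)*b₁^2*c₁*b₂^3 + (13555/21594)*a₁^3*a₂*c₂^2 + (-25266847877/36307849284)*a₁*b₁^2*b₂*c₂^2 + (70494712675/72615698568)*b₁^3*b₂*c₂^2) * c02 + ((10124980127137/1452313971360)*a₁^2*c₁*a₂^2*b₂ + (-13033312760/9076962321)*a₁^2*b₁*a₂*b₂^2 + (12224534127619/4149468489600)*a₁*c₁^2*a₂*b₂^2 + (2477033474719/29046279427200)*a₁*c₁^2*b₂^3) * c12 + ((-77873973634571/14523139713600)*b₁*c₁^2*a₂^2*b₂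 + (3801372254/9076962321)*a₁*b₁^2*a₂*b₂^2 + (602995263161/806841095200)*a₁*c₁^2*a₂*b₂^2 + (-40305845347/6239802240)*c₁^3*a₂*b₂^2 + (8841994962221/3630784928400)*b₁^2*c₁*b₂^3 + (104166765314621/29046279427200)*a₁*c₁^2*b₂^3 + (62879965833697/7261569856800)*b₁*c₁^2*b₂^3 + (22791492243691/14523139713600)*c₁^3*b₂^3 + (-13109/21594)*a₁^3*a₂^2*c₂ + (11695597679207/7261569856800)*a₁*c₁^2*a₂*b₂*c₂ + (-11950217312197/5809255885440)*b₁*c₁^2*a₂*b₂*c₂ + (193545770620919/29046279427200)*c₁^3*a₂*b₂*c₂ + (-13481310277/18153924642)*b₁^3*b₂^2*c₂ + (35910112166/5042756845)*b₁^2*c₁*b₂^2*c₂ + (3539229999477/3227364380800)*a₁*c₁^2*b₂^2*c₂ + (4150173019819/592781212800)*b₁*c₁^2*b₂^2*c₂ + (221313732583/592781212800)*c₁^3*b₂^2*c₂ + (-4172364835/18153924642)*a₁*b₁^2*b₂*c₂^2 + (-12443566271/18153924642)*b₁^3*b₂*c₂^2 + (-4863841969061/7261569856800)*a₁*b₁*c₁*b₂*c₂^2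 + (31638183914353/4149468489600)*a₁*c₁^2*b₂*c₂^2 + (31555262903467/14523139713600)*b₁*c₁^2*b₂*c₂^2 + (235189524850121/29046279427200)*c₁^3*b₂*c₂^2 + (16441/21594)*c₁^3*c₂^3) * d01 + ((-916457611357/484104657120)*b₁^2*c₁*a₂^2*b₂ + (6165777464267/1161851177088)*c₁^3*a₂^2*b₂ + (35148274551167/14523139713600)*a₁*c₁^2*a₂*b₂^2 + (-5007156328927/3227364380800)*b₁*c₁^2*a₂*b₂^2 + (-3999510431167/1452313971360)*b₁^2*c₁*b₂^3 + (4599578688961/4149468489600)*a₁*c₁^2*b₂^3 + (-71233244254343/29046279427200)*b₁*c₁^2*b₂^3 + (5581358915379/3227364380800)*c₁^3*b₂^3 + (-4391094553/12102616428)*a₁^2*b₁*a₂^2*c₂ + (-30178396724339/7261569856800)*a₁*b₁*c₁*a₂^2*c₂ + (907757579/1728945204)*a₁^2*b₁*b₂*c₂^2) * d02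
    exact pow_eq_zero_iff (by norm_num : (5:ℕ) ≠ 0) |>.mp h5

/-- `q(a₁,b₁,c₁) = a₁² + b₁² + c₁² + a₁b₁ + a₁c₁ + b₁c₁`, the conic obtained by substituting
`[1:1:1]` for the first point in the apolarity polynomial of the Klein quartic; here in the
variables `a₁ = X 0`, `b₁ = X 1`, `c₁ = X 2` of `ℂ[a₁,b₁,c₁,a₂,b₂,c₂]`. -/
noncomputable def qFirst : MvPolynomial (Fin 6) ℂ :=
  X 0 ^ 2 + X 1 ^ 2 + X 2 ^ 2 + X 0 * X 1 + X 0 * X 2 + X 1 * X 2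

/-- The same conic in the variables `a₂ = X 3`, `b₂ = X 4`, `c₂ = X 5`. -/
noncomputable def qSecond : MvPolynomial (Fin 6) ℂ :=
  X 3 ^ 2 + X 4 ^ 2 + X 5 ^ 2 + X 3 * X 4 + X 3 * X 5 + X 4 * X 5

/-- The bidegree `(2,2)` apolarity polynomial of the Klein quartic,
`D = a₁b₁a₂² + a₁²a₂b₂ + c₁²a₂c₂ + b₁c₁b₂² + b₁²b₂c₂ + a₁c₁c₂²`. -/
noncomputable def kleinApolarityPoly : MvPolynomial (Fin 6) ℂ :=
  X 0 * X 1 * X 3 ^ 2 + X 0 ^ 2 * X 3 * X 4 + X 2 ^ 2 * X 3 * X 5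
    + X 1 * X 2 * X 4 ^ 2 + X 1 ^ 2 * X 4 * X 5 + X 0 * X 2 * X 5 ^ 2

/-- **Smoothness of the fiber of `g₃ : 𝒫₃ → ℙ²` over `[1:1:1]`.**
At every point of the affine cone (with both `ℂ³`-components nonzero) of the curve
`{q(u) = q(v) = D(u,v) = 0} ⊂ ℙ²×ℙ²`, the `3×6` Jacobian matrix of `(q(u), q(v), D(u,v))`
has rank `3`. -/
theorem fiber_of_g3_smooth (a₁ b₁ c₁ a₂ b₂ c₂ : ℂ)
    (hu : ![a₁, b₁, c₁] ≠ 0) (hv : ![a₂, b₂, c₂] ≠ 0)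
    (h1 : eval ![a₁, b₁, c₁, a₂, b₂, c₂] qFirst = 0)
    (h2 : eval ![a₁, b₁, c₁, a₂, b₂, c₂] qSecond = 0)
    (h3 : eval ![a₁, b₁, c₁, a₂, b₂, c₂] kleinApolarityPoly = 0) :
    (Matrix.of fun (i : Fin 3) (k : Fin 6) =>
      eval ![a₁, b₁, c₁, a₂, b₂, c₂]
        (pderiv k (![qFirst, qSecond, kleinApolarityPoly] i))).rank = 3 := by
  -- scalar forms of the hypotheses
  have e1 : a₁^2 + a₁*b₁ + b₁^2 + a₁*c₁ + b₁*c₁ + c₁^2 = 0 := by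
    simp only [qFirst, map_add, map_mul, map_pow, eval_X] at h1
    simp only [Matrix.cons_val_zero, Matrix.cons_val_one, Matrix.head_cons, vec6_3, vec6_4,
      vec6_5, Matrix.cons_val_two, Matrix.tail_cons] at h1
    linear_combination h1
  have e2 : a₂^2 + a₂*b₂ + b₂^2 + a₂*c₂ + b₂*c₂ + c₂^2 = 0 := by
    simp only [qSecond, map_add, map_mul, map_pow, eval_X] at h2
    simp only [Matrix.cons_val_zero, Matrix.cons_val_one, Matrix.head_cons, vec6_3, vec6_4,
      vec6_5, Matrix.cons_val_two, Matrix.tail_cons] at h2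
    linear_combination h2
  have e3 : a₁*b₁*a₂^2 + a₁^2*a₂*b₂ + b₁*c₁*b₂^2 + c₁^2*a₂*c₂ + b₁^2*b₂*c₂ + a₁*c₁*c₂^2 = 0 := by
    simp only [kleinApolarityPoly, map_add, map_mul, map_pow, eval_X] at h3
    simp only [Matrix.cons_val_zero, Matrix.cons_val_one, Matrix.head_cons, vec6_3, vec6_4,
      vec6_5, Matrix.cons_val_two, Matrix.tail_cons] at h3
    linear_combination h3
  -- nonvanishing of a coordinate
  have hu' : ¬ (a₁ = 0 ∧ b₁ = 0 ∧ c₁ = 0) := by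
    rintro ⟨x, y, z⟩
    exact hu (by rw [x, y, z]; funext i; fin_cases i <;> rfl)
  have hv' : ¬ (a₂ = 0 ∧ b₂ = 0 ∧ c₂ = 0) := by
    rintro ⟨x, y, z⟩
    exact hv (by rw [x, y, z]; funext i; fin_cases i <;> rfl)
  -- the Jacobian matrix, explicitly
  have hM : (Matrix.of fun (i : Fin 3) (k : Fin 6) =>
      eval ![a₁, b₁, c₁, a₂, b₂, c₂]
        (pderiv k (![qFirst, qSecond, kleinApolarityPoly] i))) =
      Matrix.of ![
        ![2*a₁+b₁+c₁, a₁+2*b₁+c₁, a₁+b₁+2*c₁, 0, 0, 0],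
        ![0, 0, 0, 2*a₂+b₂+c₂, a₂+2*b₂+c₂, a₂+b₂+2*c₂],
        ![b₁*a₂^2+2*a₁*a₂*b₂+c₁*c₂^2, a₁*a₂^2+c₁*b₂^2+2*b₁*b₂*c₂, 2*c₁*a₂*c₂+b₁*b₂^2+a₁*c₂^2,
          2*a₁*b₁*a₂+a₁^2*b₂+c₁^2*c₂, a₁^2*a₂+2*b₁*c₁*b₂+b₁^2*c₂, c₁^2*a₂+b₁^2*b₂+2*a₁*c₁*c₂]] := by
    funext i k
    fin_cases i <;> fin_cases k <;>
      simp [qFirst, qSecond, kleinApolarityPoly, pderiv_X_self, pderiv_X_of_ne,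
        vec6_3, vec6_4, vec6_5] <;> ring
  rw [hM]
  have hli : LinearIndependent ℂ (Matrix.of ![
        ![2*a₁+b₁+c₁, a₁+2*b₁+c₁, a₁+b₁+2*c₁, (0:ℂ), 0, 0],
        ![0, 0, 0, 2*a₂+b₂+c₂, a₂+2*b₂+c₂, a₂+b₂+2*c₂],
        ![b₁*a₂^2+2*a₁*a₂*b₂+c₁*c₂^2, a₁*a₂^2+c₁*b₂^2+2*b₁*b₂*c₂, 2*c₁*a₂*c₂+b₁*b₂^2+a₁*c₂^2,
          2*a₁*b₁*a₂+a₁^2*b₂+c₁^2*c₂, a₁^2*a₂+2*b₁*c₁*b₂+b₁^2*c₂, c₁^2*a₂+b₁^2*b₂+2*a₁*c₁*c₂]]).row := by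
    rw [Fintype.linearIndependent_iff]
    intro g hg
    have hk0 := congrFun hg 0
    have hk1 := congrFun hg 1
    have hk2 := congrFun hg 2
    have hk3 := congrFun hg 3
    have hk4 := congrFun hg 4
    have hk5 := congrFun hg 5
    simp only [Fin.sum_univ_three, Pi.add_apply, Pi.smul_apply, smul_eq_mul, Matrix.row_apply, Matrix.of_apply,
      Matrix.cons_val_zero, Matrix.cons_val_one, Matrix.head_cons, Matrix.cons_val_two,
      Matrix.tail_cons, vec6_3, vec6_4, vec6_5, Pi.zero_apply, mul_zero, add_zero,
      zero_add] at hk0 hk1 hk2 hk3 hk4 hk5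
    by_cases hg2 : g 2 = 0
    · have hga : g 0 * a₁ = 0 := by
        linear_combination (3*hk0 - hk1 - hk2)/4 - ((3*(b₁*a₂^2+2*a₁*a₂*b₂+c₁*c₂^2)
          - (a₁*a₂^2+c₁*b₂^2+2*b₁*b₂*c₂) - (2*c₁*a₂*c₂+b₁*b₂^2+a₁*c₂^2))/4)*hg2
      have hgb : g 0 * b₁ = 0 := by
        linear_combination (-hk0 + 3*hk1 - hk2)/4 - ((-(b₁*a₂^2+2*a₁*a₂*b₂+c₁*c₂^2)
          + 3*(a₁*a₂^2+c₁*b₂^2+2*b₁*b₂*c₂) - (2*c₁*a₂*c₂+b₁*b₂^2+a₁*c₂^2))/4)*hg2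
      have hgc : g 0 * c₁ = 0 := by
        linear_combination (-hk0 - hk1 + 3*hk2)/4 - ((-(b₁*a₂^2+2*a₁*a₂*b₂+c₁*c₂^2)
          - (a₁*a₂^2+c₁*b₂^2+2*b₁*b₂*c₂) + 3*(2*c₁*a₂*c₂+b₁*b₂^2+a₁*c₂^2))/4)*hg2
      have hg0 : g 0 = 0 := by
        by_contra h0
        exact hu' ⟨(mul_eq_zero.mp hga).resolve_left h0,
          (mul_eq_zero.mp hgb).resolve_left h0, (mul_eq_zero.mp hgc).resolve_left h0⟩
      have hga' : g 1 * a₂ = 0 := by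
        linear_combination (3*hk3 - hk4 - hk5)/4 - ((3*(2*a₁*b₁*a₂+a₁^2*b₂+c₁^2*c₂)
          - (a₁^2*a₂+2*b₁*c₁*b₂+b₁^2*c₂) - (c₁^2*a₂+b₁^2*b₂+2*a₁*c₁*c₂))/4)*hg2
      have hgb' : g 1 * b₂ = 0 := by
        linear_combination (-hk3 + 3*hk4 - hk5)/4 - ((-(2*a₁*b₁*a₂+a₁^2*b₂+c₁^2*c₂)
          + 3*(a₁^2*a₂+2*b₁*c₁*b₂+b₁^2*c₂) - (c₁^2*a₂+b₁^2*b₂+2*a₁*c₁*c₂))/4)*hg2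
      have hgc' : g 1 * c₂ = 0 := by
        linear_combination (-hk3 - hk4 + 3*hk5)/4 - ((-(2*a₁*b₁*a₂+a₁^2*b₂+c₁^2*c₂)
          - (a₁^2*a₂+2*b₁*c₁*b₂+b₁^2*c₂) + 3*(c₁^2*a₂+b₁^2*b₂+2*a₁*c₁*c₂))/4)*hg2
      have hg1 : g 1 = 0 := by
        by_contra h0
        exact hv' ⟨(mul_eq_zero.mp hga').resolve_left h0,
          (mul_eq_zero.mp hgb').resolve_left h0, (mul_eq_zero.mp hgc').resolve_left h0⟩
      intro i; fin_cases i
      · exact hg0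
      · exact hg1
      · exact hg2
    · exfalso
      have c01 : -2*a₁^2*a₂^2 + 2*b₁^2*a₂^2 - a₁*c₁*a₂^2 + b₁*c₁*a₂^2 + 2*a₁^2*a₂*b₂ + 4*a₁*b₁*a₂*b₂ + 2*a₁*c₁*a₂*b₂ - 2*a₁*c₁*b₂^2 - b₁*c₁*b₂^2 - c₁^2*b₂^2 - 4*a₁*b₁*b₂*c₂ - 2*b₁^2*b₂*c₂ - 2*b₁*c₁*b₂*c₂ + a₁*c₁*c₂^2 + 2*b₁*c₁*c₂^2 + c₁^2*c₂^2 = 0 := by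
        have h : g 2 * (-2*a₁^2*a₂^2 + 2*b₁^2*a₂^2 - a₁*c₁*a₂^2 + b₁*c₁*a₂^2 + 2*a₁^2*a₂*b₂ + 4*a₁*b₁*a₂*b₂ + 2*a₁*c₁*a₂*b₂ - 2*a₁*c₁*b₂^2 - b₁*c₁*b₂^2 - c₁^2*b₂^2 - 4*a₁*b₁*b₂*c₂ - 2*b₁^2*b₂*c₂ - 2*b₁*c₁*b₂*c₂ + a₁*c₁*c₂^2 + 2*b₁*c₁*c₂^2 + c₁^2*c₂^2) = 0 := by
          linear_combination (a₁+2*b₁+c₁)*hk0 - (2*a₁+b₁+c₁)*hk1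
        exact (mul_eq_zero.mp h).resolve_left hg2
      have c02 : a₁*b₁*a₂^2 + b₁^2*a₂^2 + 2*b₁*c₁*a₂^2 + 2*a₁^2*a₂*b₂ + 2*a₁*b₁*a₂*b₂ + 4*a₁*c₁*a₂*b₂ - 2*a₁*b₁*b₂^2 - b₁^2*b₂^2 - b₁*c₁*b₂^2 - 4*a₁*c₁*a₂*c₂ - 2*b₁*c₁*a₂*c₂ - 2*c₁^2*a₂*c₂ - 2*a₁^2*c₂^2 - a₁*b₁*c₂^2 + b₁*c₁*c₂^2 + 2*c₁^2*c₂^2 = 0 := by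
        have h : g 2 * (a₁*b₁*a₂^2 + b₁^2*a₂^2 + 2*b₁*c₁*a₂^2 + 2*a₁^2*a₂*b₂ + 2*a₁*b₁*a₂*b₂ + 4*a₁*c₁*a₂*b₂ - 2*a₁*b₁*b₂^2 - b₁^2*b₂^2 - b₁*c₁*b₂^2 - 4*a₁*c₁*a₂*c₂ - 2*b₁*c₁*a₂*c₂ - 2*c₁^2*a₂*c₂ - 2*a₁^2*c₂^2 - a₁*b₁*c₂^2 + b₁*c₁*c₂^2 + 2*c₁^2*c₂^2) = 0 := by
          linear_combination (a₁+b₁+2*c₁)*hk0 - (2*a₁+b₁+c₁)*hk2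
        exact (mul_eq_zero.mp h).resolve_left hg2
      have c12 : a₁^2*a₂^2 + a₁*b₁*a₂^2 + 2*a₁*c₁*a₂^2 - a₁*b₁*b₂^2 - 2*b₁^2*b₂^2 + a₁*c₁*b₂^2 + 2*c₁^2*b₂^2 - 2*a₁*c₁*a₂*c₂ - 4*b₁*c₁*a₂*c₂ - 2*c₁^2*a₂*c₂ + 2*a₁*b₁*b₂*c₂ + 2*b₁^2*b₂*c₂ + 4*b₁*c₁*b₂*c₂ - a₁^2*c₂^2 - 2*a₁*b₁*c₂^2 - a₁*c₁*c₂^2 = 0 := by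
        have h : g 2 * (a₁^2*a₂^2 + a₁*b₁*a₂^2 + 2*a₁*c₁*a₂^2 - a₁*b₁*b₂^2 - 2*b₁^2*b₂^2 + a₁*c₁*b₂^2 + 2*c₁^2*b₂^2 - 2*a₁*c₁*a₂*c₂ - 4*b₁*c₁*a₂*c₂ - 2*c₁^2*a₂*c₂ + 2*a₁*b₁*b₂*c₂ + 2*b₁^2*b₂*c₂ + 4*b₁*c₁*b₂*c₂ - a₁^2*c₂^2 - 2*a₁*b₁*c₂^2 - a₁*c₁*c₂^2) = 0 := by
          linear_combination (a₁+b₁+2*c₁)*hk1 - (a₁+2*b₁+c₁)*hk2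
        exact (mul_eq_zero.mp h).resolve_left hg2
      have d01 : -2*a₁^2*a₂^2 + 2*a₁*b₁*a₂^2 + 4*a₁*b₁*a₂*b₂ - 4*b₁*c₁*a₂*b₂ + 2*a₁^2*b₂^2 - 2*b₁*c₁*b₂^2 - a₁^2*a₂*c₂ + 2*a₁*b₁*a₂*c₂ - 2*b₁^2*a₂*c₂ + c₁^2*a₂*c₂ + a₁^2*b₂*c₂ - b₁^2*b₂*c₂ - 2*b₁*c₁*b₂*c₂ + 2*c₁^2*b₂*c₂ - b₁^2*c₂^2 + c₁^2*c₂^2 = 0 := by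
        have h : g 2 * (-2*a₁^2*a₂^2 + 2*a₁*b₁*a₂^2 + 4*a₁*b₁*a₂*b₂ - 4*b₁*c₁*a₂*b₂ + 2*a₁^2*b₂^2 - 2*b₁*c₁*b₂^2 - a₁^2*a₂*c₂ + 2*a₁*b₁*a₂*c₂ - 2*b₁^2*a₂*c₂ + c₁^2*a₂*c₂ + a₁^2*b₂*c₂ - b₁^2*b₂*c₂ - 2*b₁*c₁*b₂*c₂ + 2*c₁^2*b₂*c₂ - b₁^2*c₂^2 + c₁^2*c₂^2) = 0 := by
          linear_combination (a₂+2*b₂+c₂)*hk3 - (2*a₂+b₂+c₂)*hk4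
        exact (mul_eq_zero.mp h).resolve_left hg2
      have d02 : 2*a₁*b₁*a₂^2 - 2*c₁^2*a₂^2 + a₁^2*a₂*b₂ + 2*a₁*b₁*a₂*b₂ - 2*b₁^2*a₂*b₂ - c₁^2*a₂*b₂ + a₁^2*b₂^2 - b₁^2*b₂^2 + 4*a₁*b₁*a₂*c₂ - 4*a₁*c₁*a₂*c₂ + 2*a₁^2*b₂*c₂ - b₁^2*b₂*c₂ - 2*a₁*c₁*b₂*c₂ + c₁^2*b₂*c₂ - 2*a₁*c₁*c₂^2 + 2*c₁^2*c₂^2 = 0 := by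
        have h : g 2 * (2*a₁*b₁*a₂^2 - 2*c₁^2*a₂^2 + a₁^2*a₂*b₂ + 2*a₁*b₁*a₂*b₂ - 2*b₁^2*a₂*b₂ - c₁^2*a₂*b₂ + a₁^2*b₂^2 - b₁^2*b₂^2 + 4*a₁*b₁*a₂*c₂ - 4*a₁*c₁*a₂*c₂ + 2*a₁^2*b₂*c₂ - b₁^2*b₂*c₂ - 2*a₁*c₁*b₂*c₂ + c₁^2*b₂*c₂ - 2*a₁*c₁*c₂^2 + 2*c₁^2*c₂^2) = 0 := by
          linear_combination (a₂+b₂+2*c₂)*hk3 - (2*a₂+b₂+c₂)*hk5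
        exact (mul_eq_zero.mp h).resolve_left hg2
      have d12 : a₁^2*a₂^2 - c₁^2*a₂^2 + a₁^2*a₂*b₂ - b₁^2*a₂*b₂ + 2*b₁*c₁*a₂*b₂ - 2*c₁^2*a₂*b₂ - 2*b₁^2*b₂^2 + 2*b₁*c₁*b₂^2 + 2*a₁^2*a₂*c₂ + b₁^2*a₂*c₂ - 2*a₁*c₁*a₂*c₂ - c₁^2*a₂*c₂ - 4*a₁*c₁*b₂*c₂ + 4*b₁*c₁*b₂*c₂ + 2*b₁^2*c₂^2 - 2*a₁*c₁*c₂^2 = 0 := by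
        have h : g 2 * (a₁^2*a₂^2 - c₁^2*a₂^2 + a₁^2*a₂*b₂ - b₁^2*a₂*b₂ + 2*b₁*c₁*a₂*b₂ - 2*c₁^2*a₂*b₂ - 2*b₁^2*b₂^2 + 2*b₁*c₁*b₂^2 + 2*a₁^2*a₂*c₂ + b₁^2*a₂*c₂ - 2*a₁*c₁*a₂*c₂ - c₁^2*a₂*c₂ - 4*a₁*c₁*b₂*c₂ + 4*b₁*c₁*b₂*c₂ + 2*b₁^2*c₂^2 - 2*a₁*c₁*c₂^2) = 0 := by
          linear_combination (a₂+b₂+2*c₂)*hk4 - (a₂+2*b₂+c₂)*hk5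
        exact (mul_eq_zero.mp h).resolve_left hg2
      obtain ⟨p03, p04, p05⟩ := prod3 a₁ b₁ c₁ a₂ b₂ c₂ e1 e2 e3 c01 c02 c12 d01 d02 d12
      obtain ⟨p14, p15, p13⟩ := prod3 b₁ c₁ a₁ b₂ c₂ a₂ (by linear_combination e1)
        (by linear_combination e2) (by linear_combination e3) (by linear_combination c12)
        (by linear_combination -c01) (by linear_combination -c02) (by linear_combination d12)
        (by linear_combination -d01) (by linear_combination -d02)
      obtain ⟨p25, p23, p24⟩ := prod3 c₁ a₁ b₁ c₂ a₂ b₂ (by linear_combination e1)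
        (by linear_combination e2) (by linear_combination e3) (by linear_combination -c02)
        (by linear_combination -c12) (by linear_combination c01) (by linear_combination -d02)
        (by linear_combination -d12) (by linear_combination d01)
      rcases not_and_or.mp hu' with h | h'
      · have ha : a₁ ≠ 0 := h
        exact hv' ⟨(mul_eq_zero.mp p03).resolve_left ha, (mul_eq_zero.mp p04).resolve_left ha,
          (mul_eq_zero.mp p05).resolve_left ha⟩
      rcases not_and_or.mp h' with h | h
      · have hb : b₁ ≠ 0 := h
        exact hv' ⟨(mul_eq_zero.mp p13).resolve_left hb, (mul_eq_zero.mp p14).resolve_left hb,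
          (mul_eq_zero.mp p15).resolve_left hb⟩
      · have hc : c₁ ≠ 0 := h
        exact hv' ⟨(mul_eq_zero.mp p23).resolve_left hc, (mul_eq_zero.mp p24).resolve_left hc,
          (mul_eq_zero.mp p25).resolve_left hc⟩
  rw [Matrix.rank_eq_finrank_span_row]
  rw [finrank_span_eq_card hli]
  simp
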